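/- arXiv:2511.07867 — 2 statements merged into one kernel-verified Lean document; each statement's English description precedes it below -/
import Mathlib

section
/- Let (X, ≪, ≤, d, τ) be a globally hyperbolic Lorentzian length space. If X is finitely compact, then X is timelike Cauchy complete. -/
open Set Filter Topology
open scoped ENNReal NNReal

noncomputable section

/-- A Lorentzian pre-length space structure on a metric space `X`:
relations `chron` (≪) and `causal` (≤) and a time separation function `tau`. -/
structure LorentzianPreLength (X : Type*) [MetricSpace X] where
  chron : X → X → Prop
  causal : X → X → Prop
  chron_trans : ∀ {x y z : X}, chron x y → chron y z → chron x z
  causal_refl : ∀ x : X, causal x x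
  causal_trans : ∀ {x y z : X}, causal x y → causal y z → causal x z
  chron_imp_causal : ∀ {x y : X}, chron x y → causal x y
  tau : X → X → ℝ≥0∞
  tau_lsc : LowerSemicontinuous fun p : X × X => tau p.1 p.2
  tau_rev_triangle : ∀ {x y z : X}, causal x y → causal y z → tau x y + tau y z ≤ tau x z
  tau_pos_iff : ∀ x y : X, 0 < tau x y ↔ chron x y
  tau_eq_zero_of_not_causal : ∀ x y : X, ¬ causal x y → tau x y = 0

namespace LorentzianPreLength

variable {X : Type*} [MetricSpace X] (S : LorentzianPreLength X)

/-- `x < y`, i.e. `x ≤ y` and `x ≠ y`. -/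
def strictCausal (x y : X) : Prop := S.causal x y ∧ x ≠ y

/-- Locally Lipschitz on a set. -/
def LocLipOn (γ : ℝ → X) (I : Set ℝ) : Prop :=
  ∀ t ∈ I, ∃ K : ℝ≥0, ∃ U ∈ 𝓝[I] t, LipschitzOnWith K γ U

/-- Future-directed causal curve defined on the interval `I`. -/
def IsCausalCurveOn (γ : ℝ → X) (I : Set ℝ) : Prop :=
  I.OrdConnected ∧ (∃ s ∈ I, ∃ t ∈ I, γ s ≠ γ t) ∧ LocLipOn γ I ∧
    ∀ ⦃s⦄, s ∈ I → ∀ ⦃t⦄, t ∈ I → s < t → S.causal (γ s) (γ t)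

/-- Future-directed timelike curve defined on the interval `I`. -/
def IsTimelikeCurveOn (γ : ℝ → X) (I : Set ℝ) : Prop :=
  I.OrdConnected ∧ (∃ s ∈ I, ∃ t ∈ I, γ s ≠ γ t) ∧ LocLipOn γ I ∧
    ∀ ⦃s⦄, s ∈ I → ∀ ⦃t⦄, t ∈ I → s < t → S.chron (γ s) (γ t)

/-- Past-directed causal curve defined on the interval `I`. -/
def IsPastCausalCurveOn (γ : ℝ → X) (I : Set ℝ) : Prop :=
  I.OrdConnected ∧ (∃ s ∈ I, ∃ t ∈ I, γ s ≠ γ t) ∧ LocLipOn γ I ∧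
    ∀ ⦃s⦄, s ∈ I → ∀ ⦃t⦄, t ∈ I → s < t → S.causal (γ t) (γ s)

/-- τ-length of a future-directed causal curve on `[a,b]`. -/
def tauLength (γ : ℝ → X) (a b : ℝ) : ℝ≥0∞ :=
  ⨅ (n : ℕ) (t : Fin (n + 1) → ℝ) (_ : StrictMono t) (_ : t 0 = a)
    (_ : t (Fin.last n) = b), ∑ i : Fin n, S.tau (γ (t i.castSucc)) (γ (t i.succ))

/-- τ-length of a past-directed causal curve on `[a,b]`. -/
def tauLengthPast (γ : ℝ → X) (a b : ℝ) : ℝ≥0∞ :=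
  ⨅ (n : ℕ) (t : Fin (n + 1) → ℝ) (_ : StrictMono t) (_ : t 0 = a)
    (_ : t (Fin.last n) = b), ∑ i : Fin n, S.tau (γ (t i.succ)) (γ (t i.castSucc))

/-- d-length of a curve on `[a,b]`. -/
def dLength (γ : ℝ → X) (a b : ℝ) : ℝ≥0∞ :=
  ⨆ (n : ℕ) (t : Fin (n + 1) → ℝ) (_ : StrictMono t) (_ : t 0 = a)
    (_ : t (Fin.last n) = b), ∑ i : Fin n, edist (γ (t i.castSucc)) (γ (t i.succ))

/-- Future-directed causal geodesic: every parameter has a compact subinterval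
neighborhood on which the curve is maximal. -/
def IsGeodesicOn (γ : ℝ → X) (I : Set ℝ) : Prop :=
  S.IsCausalCurveOn γ I ∧ ∀ t ∈ I, ∃ a b : ℝ, a < b ∧ Icc a b ⊆ I ∧ Icc a b ∈ 𝓝[I] t ∧
    S.tauLength γ a b = S.tau (γ a) (γ b)

/-- Past-directed causal geodesic. -/
def IsPastGeodesicOn (γ : ℝ → X) (I : Set ℝ) : Prop :=
  S.IsPastCausalCurveOn γ I ∧ ∀ t ∈ I, ∃ a b : ℝ, a < b ∧ Icc a b ⊆ I ∧ Icc a b ∈ 𝓝[I] t ∧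
    S.tauLengthPast γ a b = S.tau (γ b) (γ a)

/-- `p` and `q` are joined by a future-directed causal curve contained in `U`. -/
def CausallyJoinedIn (U : Set X) (p q : X) : Prop :=
  ∃ (γ : ℝ → X) (a b : ℝ), a < b ∧ S.IsCausalCurveOn γ (Icc a b) ∧
    (∀ t ∈ Icc a b, γ t ∈ U) ∧ γ a = p ∧ γ b = q

def CausallyPathConnected : Prop :=
  (∀ x y : X, S.chron x y → ∃ (γ : ℝ → X) (a b : ℝ), a < b ∧
      S.IsTimelikeCurveOn γ (Icc a b) ∧ γ a = x ∧ γ b = y) ∧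
  (∀ x y : X, S.strictCausal x y → ∃ (γ : ℝ → X) (a b : ℝ), a < b ∧
      S.IsCausalCurveOn γ (Icc a b) ∧ γ a = x ∧ γ b = y)

def LocallyWeaklyCausallyClosed : Prop :=
  ∀ x : X, ∃ U ∈ 𝓝 x, ∀ (p q : X) (pn qn : ℕ → X),
    (∀ n, pn n ∈ U) → (∀ n, qn n ∈ U) → p ∈ U → q ∈ U →
    Tendsto pn atTop (𝓝 p) → Tendsto qn atTop (𝓝 q) →
    (∀ n, S.CausallyJoinedIn U (pn n) (qn n)) →
    p = q ∨ S.CausallyJoinedIn U p q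

def Localizable : Prop :=
  ∀ x : X, ∃ Ω : Set X, IsOpen Ω ∧ x ∈ Ω ∧
    (∃ C : ℝ, 0 < C ∧ ∀ (γ : ℝ → X) (a b : ℝ), a < b → S.IsCausalCurveOn γ (Icc a b) →
      (∀ t ∈ Icc a b, γ t ∈ Ω) → dLength γ a b ≤ ENNReal.ofReal C) ∧
    (∃ ω : X → X → ℝ≥0∞,
      ContinuousOn (fun p : X × X => ω p.1 p.2) (Ω ×ˢ Ω) ∧
      (∀ p ∈ Ω, ∀ q ∈ Ω, ω p q ≠ ⊤) ∧
      (∀ p ∈ Ω, ∀ q ∈ Ω, ∀ r ∈ Ω, S.causal p q → S.causal q r → ω p q + ω q r ≤ ω p r) ∧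
      (∀ p ∈ Ω, ∀ q ∈ Ω, (0 < ω p q ↔ S.chron p q)) ∧
      (∀ p ∈ Ω, ∀ q ∈ Ω, ¬ S.causal p q → ω p q = 0) ∧
      (∀ y ∈ Ω, (∃ z ∈ Ω, S.chron y z) ∧ (∃ z ∈ Ω, S.chron z y)) ∧
      (∀ p ∈ Ω, ∀ q ∈ Ω, S.strictCausal p q →
        ∃ (γ : ℝ → X) (a b : ℝ), a < b ∧ S.IsCausalCurveOn γ (Icc a b) ∧
          γ a = p ∧ γ b = q ∧
          (∀ (lam : ℝ → X) (c d : ℝ), c < d → S.IsCausalCurveOn lam (Icc c d) →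
            (∀ t ∈ Icc c d, lam t ∈ Ω) → lam c = p → lam d = q →
            S.tauLength lam c d ≤ S.tauLength γ a b) ∧
          S.tauLength γ a b = ω p q ∧ ω p q ≤ S.tau p q))

/-- τ is the supremum of τ-lengths of connecting causal curves (0 if there are none). -/
def IsLengthLike : Prop :=
  ∀ x y : X, S.tau x y = ⨆ (γ : ℝ → X) (a : ℝ) (b : ℝ) (_ : a < b)
    (_ : S.IsCausalCurveOn γ (Icc a b)) (_ : γ a = x) (_ : γ b = y), S.tauLength γ a b

/-- Lorentzian length space. -/
def IsLorentzianLengthSpace : Prop :=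
  S.CausallyPathConnected ∧ S.LocallyWeaklyCausallyClosed ∧ S.Localizable ∧ S.IsLengthLike

def NonTotallyImprisoning : Prop :=
  ∀ K : Set X, IsCompact K → ∃ C : ℝ, 0 < C ∧
    ∀ (γ : ℝ → X) (a b : ℝ), a < b → S.IsCausalCurveOn γ (Icc a b) →
      (∀ t ∈ Icc a b, γ t ∈ K) → dLength γ a b ≤ ENNReal.ofReal C

def GloballyHyperbolic : Prop :=
  S.NonTotallyImprisoning ∧ ∀ x y : X, IsCompact {z : X | S.causal x z ∧ S.causal z y}

def FinitelyCompact : Prop :=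
  ∀ B : ℝ, 0 < B → ∀ p q : X, ∀ x : ℕ → X,
    ((∀ n, S.chron p q ∧ S.causal q (x n) ∧ S.tau p (x n) ≤ ENNReal.ofReal B) →
      ∃ z : X, MapClusterPt z atTop x) ∧
    ((∀ n, S.causal (x n) q ∧ S.chron q p ∧ S.tau (x n) p ≤ ENNReal.ofReal B) →
      ∃ z : X, MapClusterPt z atTop x)

def TimelikeCauchyComplete : Prop :=
  ∀ (x : ℕ → X) (B : ℕ → ℝ), (∀ n, 0 ≤ B n) → Tendsto B atTop (𝓝 0) →
    (((∀ n, S.chron (x n) (x (n + 1))) ∧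
        ∀ n m : ℕ, 0 < m → S.tau (x n) (x (n + m)) ≤ ENNReal.ofReal (B n)) ∨
      ((∀ n, S.chron (x (n + 1)) (x n)) ∧
        ∀ n m : ℕ, 0 < m → S.tau (x (n + m)) (x n) ≤ ENNReal.ofReal (B n))) →
    ∃ l : X, Tendsto x atTop (𝓝 l)

/-- A future-directed causal curve defined on `[0,c)` (where `c ∈ (0,∞]`) is future
extendible if it extends to a future-directed causal curve on `[0,c]`. -/
def FutureExtendibleFrom (γ : ℝ → X) (c : ℝ≥0∞) : Prop :=
  c ≠ ⊤ ∧ ∃ γ' : ℝ → X, S.IsCausalCurveOn γ' (Icc 0 c.toReal) ∧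
    ∀ t : ℝ, 0 ≤ t → ENNReal.ofReal t < c → γ' t = γ t

def PastExtendibleFrom (γ : ℝ → X) (c : ℝ≥0∞) : Prop :=
  c ≠ ⊤ ∧ ∃ γ' : ℝ → X, S.IsPastCausalCurveOn γ' (Icc 0 c.toReal) ∧
    ∀ t : ℝ, 0 ≤ t → ENNReal.ofReal t < c → γ' t = γ t

/-- Condition A. The domain `{t | 0 ≤ t ∧ ofReal t < c}` is `[0,c)`, and
`comap ENNReal.ofReal (𝓝[<] c)` is the filter of `t → c` from below
(`atTop` when `c = ∞`). -/
def ConditionA : Prop :=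
  (∀ x y : X, S.chron x y → ∀ c : ℝ≥0∞, 0 < c → ∀ γ : ℝ → X,
    S.IsGeodesicOn γ {t : ℝ | 0 ≤ t ∧ ENNReal.ofReal t < c} → γ 0 = y →
    ¬ S.FutureExtendibleFrom γ c →
    Tendsto (fun t : ℝ => S.tau x (γ t)) (comap ENNReal.ofReal (𝓝[<] c)) (𝓝 ⊤)) ∧
  (∀ x y : X, S.chron y x → ∀ c : ℝ≥0∞, 0 < c → ∀ γ : ℝ → X,
    S.IsPastGeodesicOn γ {t : ℝ | 0 ≤ t ∧ ENNReal.ofReal t < c} → γ 0 = y →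
    ¬ S.PastExtendibleFrom γ c →
    Tendsto (fun t : ℝ => S.tau (γ t) x) (comap ENNReal.ofReal (𝓝[<] c)) (𝓝 ⊤))

end LorentzianPreLength

namespace LorentzianPreLength
section Aux
variable {X : Type*} [MetricSpace X] {S : LorentzianPreLength X}



theorem LocLipOn.mono {γ : ℝ → X} {I J : Set ℝ} (h : LocLipOn γ I) (hJ : J ⊆ I) :
    LocLipOn γ J := by
  intro t ht
  obtain ⟨K, U, hU, hL⟩ := h t (hJ ht)
  exact ⟨K, U, nhdsWithin_mono t hJ hU, hL⟩

theorem LocLipOn.continuousOn {γ : ℝ → X} {I : Set ℝ} (h : LocLipOn γ I) :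
    ContinuousOn γ I := by
  intro t ht
  obtain ⟨K, U, hU, hL⟩ := h t ht
  have htU : t ∈ U := by
    obtain ⟨V, hVo, htV, hVU⟩ := mem_nhdsWithin.1 hU
    exact hVU ⟨htV, ht⟩
  exact (hL.continuousOn t htU).mono_of_mem_nhdsWithin hU

/-- sum over an explicit partition is at most `dLength`. -/
theorem sum_le_dLength {γ : ℝ → X} {a b : ℝ} {n : ℕ} (t : Fin (n + 1) → ℝ)
    (h1 : StrictMono t) (h2 : t 0 = a) (h3 : t (Fin.last n) = b) :
    ∑ i : Fin n, edist (γ (t i.castSucc)) (γ (t i.succ)) ≤ dLength γ a b :=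
  le_iSup_of_le n <| le_iSup_of_le t <| le_iSup_of_le h1 <| le_iSup_of_le h2 <|
    le_iSup_of_le h3 le_rfl

theorem strictMono_two {a b : ℝ} (hab : a < b) : StrictMono ![a, b] := by
  intro i j hij
  fin_cases i <;> fin_cases j <;> simp_all <;> omega

theorem edist_le_dLength {γ : ℝ → X} {a b : ℝ} (hab : a ≤ b) :
    edist (γ a) (γ b) ≤ dLength γ a b := by
  rcases eq_or_lt_of_le hab with rfl | h
  · simp
  · have := sum_le_dLength (γ := γ) ![a, b] (strictMono_two h) rfl rfl
    simpa using this



theorem cons_partition_le {γ : ℝ → X} {a u b : ℝ} {n : ℕ} (hau : a < u)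
    (t : Fin (n + 1) → ℝ) (h1 : StrictMono t) (h2 : t 0 = u) (h3 : t (Fin.last n) = b) :
    edist (γ a) (γ u) + ∑ i : Fin n, edist (γ (t i.castSucc)) (γ (t i.succ)) ≤
      dLength γ a b := by
  have hsm : StrictMono (Fin.cons a t : Fin (n + 2) → ℝ) := by
    rw [Fin.strictMono_iff_lt_succ]
    intro i
    induction i using Fin.cases with
    | zero => simpa [h2] using hau
    | succ j =>
      rw [← Fin.succ_castSucc, Fin.cons_succ, Fin.cons_succ]
      exact h1 (Fin.castSucc_lt_succ (i := j))
  have hz : (Fin.cons a t : Fin (n + 2) → ℝ) 0 = a := rfl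
  have hl : (Fin.cons a t : Fin (n + 2) → ℝ) (Fin.last (n + 1)) = b := by
    rw [← Fin.succ_last, Fin.cons_succ, h3]
  have key := sum_le_dLength (γ := γ) (Fin.cons a t) hsm hz hl
  rw [Fin.sum_univ_succ] at key
  simp only [Fin.castSucc_zero, Fin.cons_zero, Fin.succ_zero_eq_one] at key
  have h01 : (Fin.cons a t : Fin (n + 2) → ℝ) 1 = u := by
    rw [show (1 : Fin (n + 2)) = (0 : Fin (n+1)).succ from rfl, Fin.cons_succ, h2]
  rw [h01] at key
  have hsum : ∀ j : Fin n,
      edist (γ ((Fin.cons a t : Fin (n+2) → ℝ) (j.succ.castSucc))) (γ ((Fin.cons a t : Fin (n+2) → ℝ) (j.succ.succ))) =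
      edist (γ (t j.castSucc)) (γ (t j.succ)) := by
    intro j
    rw [← Fin.succ_castSucc, Fin.cons_succ, Fin.cons_succ]
  simp only [hsum] at key
  exact key

theorem dLength_cut {γ : ℝ → X} {a u b : ℝ} {M : ℝ≥0∞} (hau : a < u) (hub : u ≤ b)
    (hM : dLength γ a b ≤ M) :
    edist (γ a) (γ u) ≤ M ∧ dLength γ u b ≤ M - edist (γ a) (γ u) := by
  constructor
  · rcases eq_or_lt_of_le hub with rfl | h
    · exact (edist_le_dLength hau.le).trans hM
    · refine le_trans ?_ ((cons_partition_le hau ![u, b] (strictMono_two h) rfl rfl).trans hM)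
      exact le_self_add
  · refine iSup_le fun n => iSup_le fun t => iSup_le fun h1 => iSup_le fun h2 =>
      iSup_le fun h3 => ?_
    exact ENNReal.le_sub_of_add_le_left (edist_ne_top _ _)
      ((cons_partition_le hau t h1 h2 h3).trans hM)

/-- The purely local data of a causal curve (no non-constancy requirement). -/
def Piece (T : LorentzianPreLength X) (γ : ℝ → X) (a b : ℝ) : Prop :=
  LocLipOn γ (Icc a b) ∧
    ∀ s ∈ Icc a b, ∀ t ∈ Icc a b, s < t → T.causal (γ s) (γ t)

theorem IsCausalCurveOn.piece {γ : ℝ → X} {a b : ℝ} (h : S.IsCausalCurveOn γ (Icc a b)) :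
    Piece S γ a b :=
  ⟨h.2.2.1, fun s hs t ht hst => h.2.2.2 hs ht hst⟩

theorem Piece.mono {γ : ℝ → X} {a b a' b' : ℝ} (h : Piece S γ a b) (ha : a ≤ a')
    (hb : b' ≤ b) : Piece S γ a' b' :=
  ⟨h.1.mono (Icc_subset_Icc ha hb), fun s hs t ht hst =>
    h.2 s (Icc_subset_Icc ha hb hs) t (Icc_subset_Icc ha hb ht) hst⟩

theorem Piece.isCausalCurveOn {γ : ℝ → X} {a b : ℝ} (h : Piece S γ a b) (hab : a ≤ b)
    (hne : γ a ≠ γ b) : S.IsCausalCurveOn γ (Icc a b) :=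
  ⟨ordConnected_Icc, ⟨a, ⟨le_refl a, hab⟩, b, ⟨hab, le_refl b⟩, hne⟩, h.1,
    fun s hs t ht hst => h.2 s hs t ht hst⟩

theorem Piece.causal_le {γ : ℝ → X} {a b : ℝ} (h : Piece S γ a b) (hab : a ≤ b)
    {s t : ℝ} (hs : s ∈ Icc a b) (ht : t ∈ Icc a b) (hst : s ≤ t) :
    S.causal (γ s) (γ t) := by
  rcases eq_or_lt_of_le hst with rfl | hlt
  · exact S.causal_refl _
  · exact h.2 s hs t ht hlt

/-- The inner property in `LocallyWeaklyCausallyClosed`. -/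
def ClosedProp (T : LorentzianPreLength X) (U : Set X) : Prop :=
  ∀ (p q : X) (pn qn : ℕ → X),
    (∀ n, pn n ∈ U) → (∀ n, qn n ∈ U) → p ∈ U → q ∈ U →
    Tendsto pn atTop (𝓝 p) → Tendsto qn atTop (𝓝 q) →
    (∀ n, T.CausallyJoinedIn U (pn n) (qn n)) →
    p = q ∨ T.CausallyJoinedIn U p q

theorem causal_of_joined {U : Set X} {p q : X} (h : S.CausallyJoinedIn U p q) :
    S.causal p q := by
  obtain ⟨γ, a, b, hab, hc, _, rfl, rfl⟩ := h
  exact hc.2.2.2 ⟨le_refl a, hab.le⟩ ⟨hab.le, le_refl b⟩ hab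

theorem exists_uniform_radius (hcl : S.LocallyWeaklyCausallyClosed) {K : Set X}
    (hK : IsCompact K) :
    ∃ r : ℝ, 0 < r ∧ ∀ y ∈ K, ∃ U : Set X, Metric.closedBall y r ⊆ U ∧ ClosedProp S U := by
  choose U hU hprop using hcl
  have hr : ∀ x : X, ∃ ρ : ℝ, 0 < ρ ∧ Metric.ball x (3 * ρ) ⊆ U x := by
    intro x
    obtain ⟨ε, hε, hb⟩ := Metric.mem_nhds_iff.1 (hU x)
    refine ⟨ε / 3, by linarith, ?_⟩
    have : 3 * (ε / 3) = ε := by ring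
    rw [this]; exact hb
  choose ρ hρpos hρU using hr
  rcases eq_empty_or_nonempty K with rfl | ⟨x₀, hx₀⟩
  · exact ⟨1, one_pos, by simp⟩
  obtain ⟨b', hb'K, hb'fin, hcov⟩ := hK.elim_finite_subcover_image
    (fun y (_ : y ∈ K) => Metric.isOpen_ball)
    (fun y hy => mem_biUnion hy (Metric.mem_ball_self (hρpos y)))
  have hb'ne : b'.Nonempty := by
    rcases mem_iUnion₂.1 (hcov hx₀) with ⟨j, hj, _⟩
    exact ⟨j, hj⟩
  have hne' : hb'fin.toFinset.Nonempty := by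
    simpa [Set.Finite.toFinset_nonempty] using hb'ne
  set r : ℝ := hb'fin.toFinset.inf' hne' ρ with hrdef
  have hrpos : 0 < r := by
    rw [Finset.lt_inf'_iff]
    intro j hj
    exact hρpos j
  refine ⟨r, hrpos, fun y hy => ?_⟩
  rcases mem_iUnion₂.1 (hcov hy) with ⟨j, hj, hyj⟩
  refine ⟨U j, ?_, hprop j⟩
  intro w hw
  apply hρU j
  have h1 : dist w j ≤ dist w y + dist y j := dist_triangle _ _ _
  have h2 : dist w y ≤ r := Metric.mem_closedBall.1 hw
  have h3 : dist y j < ρ j := Metric.mem_ball.1 hyj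
  have h4 : r ≤ ρ j := Finset.inf'_le _ (hb'fin.mem_toFinset.2 hj)
  have : dist w j < 3 * ρ j := by nlinarith [hρpos j]
  exact Metric.mem_ball.2 this

theorem caseA {r : ℝ} (hr : 0 < r) {p q : X} {U : Set X}
    (hUball : Metric.closedBall p r ⊆ U) (hUprop : ClosedProp S U)
    {σ : ℕ → ℝ → X} {a b : ℕ → ℝ}
    (hab : ∀ i, a i ≤ b i)
    (hpiece : ∀ i, Piece S (σ i) (a i) (b i))
    (hpa : Tendsto (fun i => σ i (a i)) atTop (𝓝 p))
    (hqb : Tendsto (fun i => σ i (b i)) atTop (𝓝 q))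
    (hfreq : ∃ᶠ i in atTop, ∀ t ∈ Icc (a i) (b i), dist (σ i t) p < r / 2) :
    S.causal p q ∨ p = q := by
  obtain ⟨φ, hφ, hφprop⟩ := extraction_of_frequently_atTop hfreq
  have haI : ∀ i : ℕ, a i ∈ Icc (a i) (b i) := fun i => ⟨le_refl _, hab i⟩
  have hbI : ∀ i : ℕ, b i ∈ Icc (a i) (b i) := fun i => ⟨hab i, le_refl _⟩
  have hmemU : ∀ i, ∀ t ∈ Icc (a (φ i)) (b (φ i)), σ (φ i) t ∈ U := fun i t ht =>
    hUball (Metric.mem_closedBall.2 ((hφprop i t ht).le.trans (by linarith)))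
  have hqball : q ∈ Metric.closedBall p r := by
    refine Metric.isClosed_closedBall.mem_of_tendsto (hqb.comp hφ.tendsto_atTop)
      (Eventually.of_forall fun i => ?_)
    exact Metric.mem_closedBall.2 ((hφprop i _ (hbI (φ i))).le.trans (by linarith))
  by_cases hc : ∃ᶠ i : ℕ in atTop, σ (φ i) (a (φ i)) = σ (φ i) (b (φ i))
  · obtain ⟨ψ, hψ, hψe⟩ := extraction_of_frequently_atTop hc
    right
    have h1 : Tendsto (fun i => σ (φ (ψ i)) (a (φ (ψ i)))) atTop (𝓝 p) :=
      hpa.comp (hφ.comp hψ).tendsto_atTop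
    have h2 : Tendsto (fun i => σ (φ (ψ i)) (b (φ (ψ i)))) atTop (𝓝 q) :=
      hqb.comp (hφ.comp hψ).tendsto_atTop
    exact tendsto_nhds_unique (h1.congr fun i => hψe i) h2
  · rw [not_frequently] at hc
    obtain ⟨N, hN⟩ := eventually_atTop.1 hc
    have hg : Tendsto (fun i : ℕ => φ (i + N)) atTop atTop :=
      hφ.tendsto_atTop.comp (tendsto_add_atTop_nat N)
    have hres := hUprop p q (fun i => σ (φ (i + N)) (a (φ (i + N))))
      (fun i => σ (φ (i + N)) (b (φ (i + N))))
      (fun i => hmemU _ _ (haI _)) (fun i => hmemU _ _ (hbI _))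
      (hUball (Metric.mem_closedBall_self hr.le)) (hUball hqball)
      (hpa.comp hg) (hqb.comp hg) ?_
    · rcases hres with h | h
      · exact Or.inr h
      · exact Or.inl (causal_of_joined h)
    · intro i
      have hne := hN (i + N) (Nat.le_add_left _ _)
      have hlt : a (φ (i + N)) < b (φ (i + N)) :=
        lt_of_le_of_ne (hab _) fun h => hne (by rw [h])
      exact ⟨σ (φ (i + N)), a _, b _, hlt, (hpiece _).isCausalCurveOn (hab _) hne,
        fun t ht => hmemU _ t ht, rfl, rfl⟩

/-- First exit time of a causal-curve piece from the ball of radius `r/2` around `p`. -/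
theorem exists_exit {γ : ℝ → X} {a b r : ℝ} {p : X} (hr : 0 < r)
    (hpiece : Piece S γ a b)
    (hex : ∃ t ∈ Icc a b, r / 2 ≤ dist (γ t) p)
    (hstart : dist (γ a) p < r / 8) :
    ∃ u, u ∈ Icc a b ∧ r / 2 ≤ dist (γ u) p ∧ (∀ t ∈ Ico a u, dist (γ t) p < r / 2) ∧
      dist (γ u) p ≤ r / 2 ∧ a < u := by
  obtain ⟨t₀, ht₀, hd⟩ := hex
  set f : ℝ → ℝ := fun t => dist (γ t) p with hf
  have hcont : ContinuousOn f (Icc a b) :=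
    (continuous_id.dist continuous_const).comp_continuousOn hpiece.1.continuousOn
  set E : Set ℝ := Icc a b ∩ f ⁻¹' Ici (r / 2) with hE
  have hEclosed : IsClosed E :=
    hcont.preimage_isClosed_of_isClosed isClosed_Icc isClosed_Ici
  have hEne : E.Nonempty := ⟨t₀, ht₀, hd⟩
  have hEbdd : BddBelow E := bddBelow_Icc.mono inter_subset_left
  set u₀ := sInf E with hu₀
  have huE : u₀ ∈ E := hEclosed.csInf_mem hEne hEbdd
  have hu₀I : u₀ ∈ Icc a b := huE.1
  have hu₀d : r / 2 ≤ f u₀ := huE.2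
  have hne0 : a < u₀ := by
    rcases eq_or_lt_of_le hu₀I.1 with h | h
    · exfalso; rw [← h] at hu₀d; simp only [hf] at hu₀d hstart; linarith
    · exact h
  have hbefore : ∀ t ∈ Ico a u₀, f t < r / 2 := by
    intro t ht
    by_contra hcon
    push_neg at hcon
    have htE : t ∈ E := ⟨⟨ht.1, ht.2.le.trans hu₀I.2⟩, hcon⟩
    exact absurd (csInf_le hEbdd htE) (not_le.2 ht.2)
  have hle : f u₀ ≤ r / 2 := by
    by_contra hgt
    push_neg at hgt
    have hcw : ContinuousWithinAt f (Icc a b) u₀ := hcont u₀ hu₀I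
    have hev : ∀ᶠ t in 𝓝[Icc a b] u₀, r / 2 < f t := hcw.eventually (eventually_gt_nhds hgt)
    have hmono : 𝓝[Ico a u₀] u₀ ≤ 𝓝[Icc a b] u₀ :=
      nhdsWithin_mono _ fun t ht => ⟨ht.1, ht.2.le.trans hu₀I.2⟩
    have hev2 : ∀ᶠ t in 𝓝[Ico a u₀] u₀, r / 2 < f t := hev.filter_mono hmono
    have hev3 : ∀ᶠ t in 𝓝[Ico a u₀] u₀, f t < r / 2 :=
      eventually_of_mem self_mem_nhdsWithin hbefore
    have hNB : (𝓝[Ico a u₀] u₀).NeBot := by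
      rw [nhdsWithin_Ico_eq_nhdsLT hne0]
      infer_instance
    obtain ⟨t, h1, h2⟩ := (hev2.and hev3).exists
    linarith
  exact ⟨u₀, hu₀I, hu₀d, hbefore, hle, hne0⟩

theorem limit_causal {K : Set X} (hKc : IsCompact K) {r : ℝ} (hr : 0 < r)
    (hcl : ∀ y ∈ K, ∃ U : Set X, Metric.closedBall y r ⊆ U ∧ ClosedProp S U) :
    ∀ (m : ℕ) (σ : ℕ → ℝ → X) (a b : ℕ → ℝ) (p q : X),
      (∀ i, a i ≤ b i) →
      (∀ i, Piece S (σ i) (a i) (b i)) →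
      (∀ i, ∀ t ∈ Icc (a i) (b i), σ i t ∈ K) →
      (∀ i, dLength (σ i) (a i) (b i) ≤ (m : ℝ≥0∞) * ENNReal.ofReal (r / 4)) →
      Tendsto (fun i => σ i (a i)) atTop (𝓝 p) →
      Tendsto (fun i => σ i (b i)) atTop (𝓝 q) →
      S.causal p q ∨ p = q := by
  intro m
  induction m with
  | zero =>
    intro σ a b p q hab hpiece hmem hbud hpa hqb
    have hpK : p ∈ K := hKc.isClosed.mem_of_tendsto hpa
      (Eventually.of_forall fun i => hmem i _ ⟨le_refl _, hab i⟩)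
    obtain ⟨U, hUball, hUprop⟩ := hcl p hpK
    by_cases hA : ∃ᶠ i in atTop, ∀ t ∈ Icc (a i) (b i), dist (σ i t) p < r / 2
    · exact caseA hr hUball hUprop hab hpiece hpa hqb hA
    · exfalso
      rw [not_frequently] at hA
      have hA' : ∀ᶠ i in atTop, ∃ t ∈ Icc (a i) (b i), r / 2 ≤ dist (σ i t) p := by
        filter_upwards [hA] with i hi
        push_neg at hi
        obtain ⟨t, ht, h2⟩ := hi
        exact ⟨t, ht, h2⟩
      have hclose : ∀ᶠ i in atTop, σ i (a i) ∈ Metric.ball p (r / 8) :=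
        hpa (Metric.ball_mem_nhds p (by linarith))
      obtain ⟨i, hex, hcl8⟩ := (hA'.and hclose).exists
      rw [Metric.mem_ball] at hcl8
      obtain ⟨u₀, hu₀I, hu₀d, _, _, hau₀⟩ := exists_exit hr (hpiece i) hex hcl8
      have hb0 : dLength (σ i) (a i) (b i) ≤ 0 := by simpa using hbud i
      have hcut := (dLength_cut hau₀ hu₀I.2 hb0).1
      have hzero : dist (σ i (a i)) (σ i u₀) = 0 := by
        rw [edist_dist, nonpos_iff_eq_zero, ENNReal.ofReal_eq_zero] at hcut
        exact le_antisymm hcut dist_nonneg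
      have h3 := dist_triangle (σ i u₀) (σ i (a i)) p
      rw [dist_comm (σ i u₀) (σ i (a i)), hzero] at h3
      linarith
  | succ m ih =>
    intro σ a b p q hab hpiece hmem hbud hpa hqb
    have hpK : p ∈ K := hKc.isClosed.mem_of_tendsto hpa
      (Eventually.of_forall fun i => hmem i _ ⟨le_refl _, hab i⟩)
    obtain ⟨U, hUball, hUprop⟩ := hcl p hpK
    by_cases hA : ∃ᶠ i in atTop, ∀ t ∈ Icc (a i) (b i), dist (σ i t) p < r / 2
    · exact caseA hr hUball hUprop hab hpiece hpa hqb hA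
    · rw [not_frequently] at hA
      have hA' : ∀ᶠ i in atTop, ∃ t ∈ Icc (a i) (b i), r / 2 ≤ dist (σ i t) p := by
        filter_upwards [hA] with i hi
        push_neg at hi
        obtain ⟨t, ht, h2⟩ := hi
        exact ⟨t, ht, h2⟩
      have hclose : ∀ᶠ i in atTop, σ i (a i) ∈ Metric.ball p (r / 8) :=
        hpa (Metric.ball_mem_nhds p (by linarith))
      obtain ⟨N, hN⟩ := eventually_atTop.1 (hA'.and hclose)
      have hN' : ∀ i : ℕ, (∃ t ∈ Icc (a (i + N)) (b (i + N)), r / 2 ≤ dist (σ (i + N) t) p) ∧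
          dist (σ (i + N) (a (i + N))) p < r / 8 := by
        intro i
        obtain ⟨h1, h2⟩ := hN (i + N) (Nat.le_add_left _ _)
        exact ⟨h1, Metric.mem_ball.1 h2⟩
      have hEx : ∀ i : ℕ, ∃ u, u ∈ Icc (a (i + N)) (b (i + N)) ∧
          r / 2 ≤ dist (σ (i + N) u) p ∧
          (∀ t ∈ Ico (a (i + N)) u, dist (σ (i + N) t) p < r / 2) ∧
          dist (σ (i + N) u) p ≤ r / 2 ∧ a (i + N) < u := fun i =>
        exists_exit hr (hpiece (i + N)) (hN' i).1 (hN' i).2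
      choose u hu1 hu2 hu3 hu4 hu5 using hEx
      have hmemK : ∀ i : ℕ, σ (i + N) (u i) ∈ K := fun i => hmem (i + N) (u i) (hu1 i)
      obtain ⟨y', hy'K, ψ, hψ, hψt⟩ := hKc.tendsto_subseq hmemK
      have hsep : ∀ i, r / 4 ≤ dist (σ (i + N) (a (i + N))) (σ (i + N) (u i)) := by
        intro i
        have h1 := hu2 i
        have h2 := (hN' i).2
        have h3 := dist_triangle (σ (i + N) (u i)) (σ (i + N) (a (i + N))) p
        rw [dist_comm (σ (i + N) (u i)) (σ (i + N) (a (i + N)))] at h3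
        linarith
      have hUmem : ∀ i, ∀ t ∈ Icc (a (i + N)) (u i), σ (i + N) t ∈ U := by
        intro i t ht
        have hd : dist (σ (i + N) t) p ≤ r / 2 := by
          rcases eq_or_lt_of_le ht.2 with rfl | hlt
          · exact hu4 i
          · exact (hu3 i t ⟨ht.1, hlt⟩).le
        exact hUball (Metric.mem_closedBall.2 (hd.trans (by linarith)))
      have hpit : Tendsto (fun i : ℕ => σ (ψ i + N) (a (ψ i + N))) atTop (𝓝 p) :=
        hpa.comp ((tendsto_add_atTop_nat N).comp hψ.tendsto_atTop)
      have hy'ball : y' ∈ Metric.closedBall p (r / 2) := by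
        refine Metric.isClosed_closedBall.mem_of_tendsto hψt (Eventually.of_forall fun i => ?_)
        exact Metric.mem_closedBall.2 (hu4 (ψ i))
      have hpy' : S.causal p y' := by
        have hres := hUprop p y' (fun i => σ (ψ i + N) (a (ψ i + N)))
          (fun i => σ (ψ i + N) (u (ψ i)))
          (fun i => hUmem (ψ i) _ ⟨le_refl _, (hu5 (ψ i)).le⟩)
          (fun i => hUmem (ψ i) _ ⟨(hu5 (ψ i)).le, le_refl _⟩)
          (hUball (Metric.mem_closedBall_self hr.le))
          (hUball (Metric.closedBall_subset_closedBall (by linarith) hy'ball))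
          hpit hψt ?_
        · rcases hres with h | h
          · exfalso
            have hd : Tendsto (fun i => dist (σ (ψ i + N) (u (ψ i))) p) atTop
                (𝓝 (dist y' p)) := hψt.dist tendsto_const_nhds
            have h2 : r / 2 ≤ dist y' p :=
              ge_of_tendsto hd (Eventually.of_forall fun i => hu2 (ψ i))
            rw [← h, dist_self] at h2
            linarith
          · exact causal_of_joined h
        · intro i
          have hne : σ (ψ i + N) (a (ψ i + N)) ≠ σ (ψ i + N) (u (ψ i)) := by
            intro h
            have := hsep (ψ i)
            rw [h, dist_self] at this
            linarith
          exact ⟨σ (ψ i + N), a (ψ i + N), u (ψ i), hu5 (ψ i),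
            ((hpiece (ψ i + N)).mono le_rfl (hu1 (ψ i)).2).isCausalCurveOn (hu5 (ψ i)).le hne,
            fun t ht => hUmem (ψ i) t ht, rfl, rfl⟩
      have hbud' : ∀ i : ℕ, dLength (σ (i + N)) (u i) (b (i + N)) ≤
          (m : ℝ≥0∞) * ENNReal.ofReal (r / 4) := by
        intro i
        have hcut := (dLength_cut (hu5 i) (hu1 i).2 (hbud (i + N))).2
        have hRe : ENNReal.ofReal (r / 4) ≤ edist (σ (i + N) (a (i + N))) (σ (i + N) (u i)) := by
          rw [edist_dist]
          exact ENNReal.ofReal_le_ofReal (hsep i)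
        refine hcut.trans ?_
        calc ((m + 1 : ℕ) : ℝ≥0∞) * ENNReal.ofReal (r / 4) -
              edist (σ (i + N) (a (i + N))) (σ (i + N) (u i)) ≤
            ((m + 1 : ℕ) : ℝ≥0∞) * ENNReal.ofReal (r / 4) - ENNReal.ofReal (r / 4) :=
              tsub_le_tsub_left hRe _
          _ = (m : ℝ≥0∞) * ENNReal.ofReal (r / 4) := by
              push_cast
              rw [add_mul, one_mul, ENNReal.add_sub_cancel_right ENNReal.ofReal_ne_top]
      have hqb' : Tendsto (fun i : ℕ => σ (ψ i + N) (b (ψ i + N))) atTop (𝓝 q) :=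
        hqb.comp ((tendsto_add_atTop_nat N).comp hψ.tendsto_atTop)
      have hres2 := ih (fun i => σ (ψ i + N)) (fun i => u (ψ i)) (fun i => b (ψ i + N)) y' q
        (fun i => (hu1 (ψ i)).2)
        (fun i => (hpiece (ψ i + N)).mono (hu1 (ψ i)).1 le_rfl)
        (fun i t ht => hmem (ψ i + N) t ⟨(hu1 (ψ i)).1.trans ht.1, ht.2⟩)
        (fun i => hbud' (ψ i)) hψt hqb'
      rcases hres2 with h | h
      · exact Or.inl (S.causal_trans hpy' h)
      · exact Or.inl (h ▸ hpy')

theorem Piece.translate {γ : ℝ → X} {a b c : ℝ} (h : Piece S γ a b) :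
    Piece S (fun t => γ (t + c)) (a - c) (b - c) := by
  constructor
  · intro t ht
    have ht' : t + c ∈ Icc a b := ⟨by linarith [ht.1], by linarith [ht.2]⟩
    obtain ⟨Kc, Uc, hU, hL⟩ := h.1 (t + c) ht'
    obtain ⟨V, hVo, htV, hVU⟩ := mem_nhdsWithin.1 hU
    refine ⟨Kc, ((fun s : ℝ => s + c) ⁻¹' V) ∩ Icc (a - c) (b - c), mem_nhdsWithin.2
      ⟨(fun s : ℝ => s + c) ⁻¹' V, hVo.preimage (continuous_id.add continuous_const), htV,
        fun x hx => hx⟩, ?_⟩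
    rw [lipschitzOnWith_iff_dist_le_mul]
    intro x hx y hy
    have hx' : x + c ∈ Uc := hVU ⟨hx.1, ⟨by linarith [hx.2.1], by linarith [hx.2.2]⟩⟩
    have hy' : y + c ∈ Uc := hVU ⟨hy.1, ⟨by linarith [hy.2.1], by linarith [hy.2.2]⟩⟩
    have := lipschitzOnWith_iff_dist_le_mul.1 hL (x + c) hx' (y + c) hy'
    rwa [dist_add_right] at this
  · intro s hs t ht hst
    exact h.2 (s + c) ⟨by linarith [hs.1], by linarith [hs.2]⟩ (t + c)
      ⟨by linarith [ht.1], by linarith [ht.2]⟩ (by linarith)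

theorem exists_piece_from_zero (hpc : S.CausallyPathConnected) {p q : X}
    (h : S.strictCausal p q) :
    ∃ s : ℝ, 0 < s ∧ ∃ γ : ℝ → X, Piece S γ 0 s ∧ γ 0 = p ∧ γ s = q := by
  obtain ⟨γ, a, b, hab, hc, ha, hb⟩ := hpc.2 p q h
  refine ⟨b - a, by linarith, fun t => γ (t + a), ?_, ?_, ?_⟩
  · have := hc.piece.translate (c := a)
    rwa [sub_self] at this
  · simpa using ha
  · show γ (b - a + a) = q
    rw [show b - a + a = b by ring]; exact hb

theorem Piece.glue {α β : ℝ → X} {s u : ℝ} (hs : 0 < s) (hu : 0 < u)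
    (hα : Piece S α 0 s) (hβ : Piece S β 0 u) (hmatch : α s = β 0) :
    Piece S (fun t => if t ≤ s then α t else β (t - s)) 0 (s + u) := by
  set g : ℝ → X := fun t => if t ≤ s then α t else β (t - s) with hg
  have hg_left : ∀ {x : ℝ}, x ≤ s → g x = α x := fun {x} h => if_pos h
  have hg_right : ∀ {x : ℝ}, s ≤ x → g x = β (x - s) := by
    intro x h
    by_cases h' : x ≤ s
    · have hxs : x = s := le_antisymm h' h
      subst hxs
      rw [hg_left (le_refl x), sub_self, ← hmatch]
    · exact if_neg h'
  constructor
  · -- LocLipOn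
    intro t₀ ht₀
    rcases lt_trichotomy t₀ s with hlt | heq | hgt
    · -- t₀ < s
      obtain ⟨K₁, U₁, hU₁, hL₁⟩ := hα.1 t₀ ⟨ht₀.1, hlt.le⟩
      obtain ⟨V, hVo, htV, hVU⟩ := mem_nhdsWithin.1 hU₁
      refine ⟨K₁, (V ∩ Iio s) ∩ Icc 0 (s + u), mem_nhdsWithin.2
        ⟨V ∩ Iio s, hVo.inter isOpen_Iio, ⟨htV, hlt⟩, fun x hx => hx⟩, ?_⟩
      rw [lipschitzOnWith_iff_dist_le_mul]
      intro x hx y hy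
      have hxU : x ∈ U₁ := hVU ⟨hx.1.1, ⟨hx.2.1, (le_of_lt hx.1.2)⟩⟩
      have hyU : y ∈ U₁ := hVU ⟨hy.1.1, ⟨hy.2.1, (le_of_lt hy.1.2)⟩⟩
      rw [hg_left (le_of_lt hx.1.2), hg_left (le_of_lt hy.1.2)]
      exact lipschitzOnWith_iff_dist_le_mul.1 hL₁ x hxU y hyU
    · -- t₀ = s
      subst heq
      obtain ⟨K₁, U₁, hU₁, hL₁⟩ := hα.1 t₀ ⟨hs.le, le_refl _⟩
      obtain ⟨V₁, hV₁o, hV₁t, hV₁U⟩ := mem_nhdsWithin.1 hU₁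
      obtain ⟨K₂, U₂, hU₂, hL₂⟩ := hβ.1 0 ⟨le_refl _, hu.le⟩
      obtain ⟨V₂, hV₂o, hV₂t, hV₂U⟩ := mem_nhdsWithin.1 hU₂
      set W : Set ℝ := V₁ ∩ (fun x : ℝ => x - t₀) ⁻¹' V₂ with hW
      have hWo : IsOpen W := hV₁o.inter (hV₂o.preimage (continuous_id.sub continuous_const))
      have htW : t₀ ∈ W := ⟨hV₁t, by simpa using hV₂t⟩
      refine ⟨max K₁ K₂, W ∩ Icc 0 (t₀ + u), mem_nhdsWithin.2
        ⟨W, hWo, htW, fun x hx => hx⟩, ?_⟩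
      rw [lipschitzOnWith_iff_dist_le_mul]
      have hK₁ : (K₁ : ℝ) ≤ (max K₁ K₂ : ℝ≥0) := by
        exact_mod_cast le_max_left K₁ K₂
      have hK₂ : (K₂ : ℝ) ≤ (max K₁ K₂ : ℝ≥0) := by
        exact_mod_cast le_max_right K₁ K₂
      have key : ∀ x y : ℝ, x ∈ W ∩ Icc 0 (t₀ + u) → y ∈ W ∩ Icc 0 (t₀ + u) → x ≤ y →
          dist (g x) (g y) ≤ (max K₁ K₂ : ℝ≥0) * dist x y := by
        intro x y hx hy hxy
        have hdxy : dist x y = y - x := by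
          rw [dist_comm, Real.dist_eq, abs_of_nonneg (by linarith)]
        by_cases hys : y ≤ t₀
        · have hxU : x ∈ U₁ := hV₁U ⟨hx.1.1, ⟨hx.2.1, hxy.trans hys⟩⟩
          have hyU : y ∈ U₁ := hV₁U ⟨hy.1.1, ⟨hy.2.1, hys⟩⟩
          rw [hg_left (hxy.trans hys), hg_left hys]
          calc dist (α x) (α y) ≤ (K₁ : ℝ) * dist x y :=
                lipschitzOnWith_iff_dist_le_mul.1 hL₁ x hxU y hyU
            _ ≤ (max K₁ K₂ : ℝ≥0) * dist x y :=
                mul_le_mul_of_nonneg_right hK₁ dist_nonneg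
        · push_neg at hys
          by_cases hxs : x ≤ t₀
          · -- straddle
            have hxU : x ∈ U₁ := hV₁U ⟨hx.1.1, ⟨hx.2.1, hxs⟩⟩
            have htU : t₀ ∈ U₁ := hV₁U ⟨hV₁t, ⟨hs.le, le_refl _⟩⟩
            have h0U : (0 : ℝ) ∈ U₂ := hV₂U ⟨hV₂t, ⟨le_refl _, hu.le⟩⟩
            have hyU : y - t₀ ∈ U₂ := hV₂U ⟨hy.1.2, ⟨by linarith, by linarith [hy.2.2]⟩⟩
            have h1 : dist (α x) (α t₀) ≤ (K₁ : ℝ) * (t₀ - x) := by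
              have := lipschitzOnWith_iff_dist_le_mul.1 hL₁ x hxU t₀ htU
              rwa [Real.dist_eq, abs_of_nonpos (by linarith), neg_sub] at this
            have h2 : dist (β 0) (β (y - t₀)) ≤ (K₂ : ℝ) * (y - t₀) := by
              have := lipschitzOnWith_iff_dist_le_mul.1 hL₂ 0 h0U (y - t₀) hyU
              rwa [Real.dist_eq, abs_of_nonpos (by linarith), neg_sub, sub_zero] at this
            have htri : dist (g x) (g y) ≤ dist (g x) (g t₀) + dist (g t₀) (g y) :=
              dist_triangle _ _ _
            rw [hg_left hxs, hg_left (le_refl t₀)] at htri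
            have hgt₀ : α t₀ = β 0 := hmatch
            have htri2 : dist (g x) (g y) ≤ dist (α x) (α t₀) + dist (β 0) (β (y - t₀)) := by
              rw [hg_left hxs, hg_right hys.le]
              calc dist (α x) (β (y - t₀)) ≤ dist (α x) (α t₀) + dist (α t₀) (β (y - t₀)) :=
                    dist_triangle _ _ _
                _ = dist (α x) (α t₀) + dist (β 0) (β (y - t₀)) := by rw [hgt₀]
            rw [hdxy]
            have hxnn : (0:ℝ) ≤ t₀ - x := by linarith
            have hynn : (0:ℝ) ≤ y - t₀ := by linarith
            nlinarith [mul_le_mul_of_nonneg_right hK₁ hxnn, mul_le_mul_of_nonneg_right hK₂ hynn]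
          · push_neg at hxs
            have hxU : x - t₀ ∈ U₂ := hV₂U ⟨hx.1.2, ⟨by linarith, by linarith [hx.2.2]⟩⟩
            have hyU : y - t₀ ∈ U₂ := hV₂U ⟨hy.1.2, ⟨by linarith, by linarith [hy.2.2]⟩⟩
            rw [hg_right hxs.le, hg_right hys.le]
            have := lipschitzOnWith_iff_dist_le_mul.1 hL₂ (x - t₀) hxU (y - t₀) hyU
            rw [dist_sub_right] at this
            calc dist (β (x - t₀)) (β (y - t₀)) ≤ (K₂ : ℝ) * dist x y := this
              _ ≤ (max K₁ K₂ : ℝ≥0) * dist x y :=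
                  mul_le_mul_of_nonneg_right hK₂ dist_nonneg
      intro x hx y hy
      rcases le_total x y with h | h
      · exact key x y hx hy h
      · rw [dist_comm (g x) (g y), dist_comm x y]
        exact key y x hy hx h
    · -- s < t₀
      have ht₀' : t₀ - s ∈ Icc 0 u := ⟨by linarith, by linarith [ht₀.2]⟩
      obtain ⟨K₂, U₂, hU₂, hL₂⟩ := hβ.1 (t₀ - s) ht₀'
      obtain ⟨V, hVo, htV, hVU⟩ := mem_nhdsWithin.1 hU₂
      refine ⟨K₂, (((fun x : ℝ => x - s) ⁻¹' V) ∩ Ioi s) ∩ Icc 0 (s + u), mem_nhdsWithin.2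
        ⟨((fun x : ℝ => x - s) ⁻¹' V) ∩ Ioi s,
          (hVo.preimage (continuous_id.sub continuous_const)).inter isOpen_Ioi,
          ⟨htV, hgt⟩, fun x hx => hx⟩, ?_⟩
      rw [lipschitzOnWith_iff_dist_le_mul]
      intro x hx y hy
      have hxU : x - s ∈ U₂ :=
        hVU ⟨hx.1.1, ⟨by have := mem_Ioi.1 hx.1.2; linarith, by linarith [hx.2.2]⟩⟩
      have hyU : y - s ∈ U₂ :=
        hVU ⟨hy.1.1, ⟨by have := mem_Ioi.1 hy.1.2; linarith, by linarith [hy.2.2]⟩⟩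
      rw [hg_right (le_of_lt hx.1.2), hg_right (le_of_lt hy.1.2)]
      have := lipschitzOnWith_iff_dist_le_mul.1 hL₂ (x - s) hxU (y - s) hyU
      rwa [dist_sub_right] at this
  · -- causality
    intro s₁ hs₁ t₁ ht₁ hst
    by_cases h1 : t₁ ≤ s
    · rw [hg_left (hst.le.trans h1), hg_left h1]
      exact hα.2 s₁ ⟨hs₁.1, hst.le.trans h1⟩ t₁ ⟨ht₁.1, h1⟩ hst
    · push_neg at h1
      by_cases h2 : s₁ ≤ s
      · rw [hg_left h2, hg_right h1.le]
        have c1 : S.causal (α s₁) (α s) := hα.causal_le hs.le ⟨hs₁.1, h2⟩ ⟨hs.le, le_refl _⟩ h2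
        have c2 : S.causal (β 0) (β (t₁ - s)) :=
          hβ.2 0 ⟨le_refl _, hu.le⟩ (t₁ - s) ⟨by linarith, by linarith [ht₁.2]⟩ (by linarith)
        rw [hmatch] at c1
        exact S.causal_trans c1 c2
      · push_neg at h2
        rw [hg_right h2.le, hg_right h1.le]
        exact hβ.2 (s₁ - s) ⟨by linarith, by linarith [hs₁.2]⟩ (t₁ - s)
          ⟨by linarith, by linarith [ht₁.2]⟩ (by linarith)

theorem loop_exists (hpc : S.CausallyPathConnected) {z z' : X}
    (h1 : S.strictCausal z z') (h2 : S.strictCausal z' z) (n : ℕ) :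
    ∃ (P : ℝ) (γ : ℝ → X) (t : ℕ → ℝ), 0 < P ∧ Piece S γ 0 P ∧
      (∀ j ≤ 2 * (n + 1), t j ∈ Icc 0 P) ∧
      (∀ j < 2 * (n + 1), t j < t (j + 1)) ∧ t 0 = 0 ∧ t (2 * (n + 1)) = P ∧
      (∀ j ≤ 2 * (n + 1), γ (t j) = if Even j then z else z') := by
  obtain ⟨s₁, hs₁, γ₁, hγ₁, hγ₁0, hγ₁s⟩ := exists_piece_from_zero hpc h1
  obtain ⟨s₂, hs₂, γ₂, hγ₂, hγ₂0, hγ₂s⟩ := exists_piece_from_zero hpc h2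
  have hmatch₁ : γ₁ s₁ = γ₂ 0 := by rw [hγ₁s, hγ₂0]
  set gG : ℝ → X := fun t => if t ≤ s₁ then γ₁ t else γ₂ (t - s₁) with hgGdef
  have hgG : Piece S gG 0 (s₁ + s₂) := Piece.glue hs₁ hs₂ hγ₁ hγ₂ hmatch₁
  have hgG0 : gG 0 = z := by rw [show gG 0 = γ₁ 0 from if_pos hs₁.le, hγ₁0]
  have hgGs₁ : gG s₁ = z' := by rw [show gG s₁ = γ₁ s₁ from if_pos (le_refl s₁), hγ₁s]
  have hgGP : gG (s₁ + s₂) = z := by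
    rw [show gG (s₁ + s₂) = γ₂ (s₁ + s₂ - s₁) from if_neg (by linarith),
      show s₁ + s₂ - s₁ = s₂ by ring, hγ₂s]
  induction n with
  | zero =>
    refine ⟨s₁ + s₂, gG, fun j => if j = 0 then 0 else if j = 1 then s₁ else s₁ + s₂,
      by linarith, hgG, ?_, ?_, rfl, rfl, ?_⟩
    · intro j _
      rcases j with _ | _ | j
      · exact ⟨le_refl _, show (0:ℝ) ≤ s₁ + s₂ by linarith⟩
      · exact ⟨show (0:ℝ) ≤ s₁ from hs₁.le, show s₁ ≤ s₁ + s₂ by linarith⟩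
      · exact ⟨show (0:ℝ) ≤ s₁ + s₂ by linarith, le_refl _⟩
    · intro j hj
      interval_cases j
      · show (0:ℝ) < s₁
        exact hs₁
      · show s₁ < s₁ + s₂
        linarith
    · intro j hj
      interval_cases j
      · show gG 0 = if Even 0 then z else z'
        rw [if_pos Even.zero, hgG0]
      · show gG s₁ = if Even 1 then z else z'
        rw [if_neg (by simp : ¬ Even 1), hgGs₁]
      · show gG (s₁ + s₂) = if Even 2 then z else z'
        rw [if_pos (by norm_num : Even 2), hgGP]
  | succ n ihn =>
    obtain ⟨P, γ, t, hP, hpiece, htI, htlt, ht0, htlast, htval⟩ := ihn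
    have hγP : γ P = z := by
      have := htval (2 * (n + 1)) (le_refl _)
      rw [htlast] at this
      simpa using this
    have hmatch₂ : γ P = gG 0 := by rw [hγP, hgG0]
    set γ' : ℝ → X := fun x => if x ≤ P then γ x else gG (x - P) with hγ'def
    set t' : ℕ → ℝ := fun j => if j ≤ 2 * (n + 1) then t j
      else if j = 2 * (n + 1) + 1 then P + s₁ else P + (s₁ + s₂) with ht'def
    have ht'1 : ∀ j, j ≤ 2 * (n + 1) → t' j = t j := fun j h => if_pos h
    have ht'2 : t' (2 * (n + 1) + 1) = P + s₁ :=
      ((if_neg (by omega)).trans (if_pos rfl))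
    have ht'3 : t' (2 * (n + 1) + 2) = P + (s₁ + s₂) :=
      ((if_neg (by omega)).trans (if_neg (by omega)))
    have hγ'1 : ∀ x, x ≤ P → γ' x = γ x := fun x h => if_pos h
    have hγ'2 : ∀ x, P < x → γ' x = gG (x - P) := fun x h => if_neg (not_le.2 h)
    have h2n : 2 * (n + 1 + 1) = 2 * (n + 1) + 2 := by ring
    refine ⟨P + (s₁ + s₂), γ', t', by linarith,
      Piece.glue hP (by linarith) hpiece hgG hmatch₂, ?_, ?_, ?_, ?_, ?_⟩
    · intro j hj
      rcases (by omega : j ≤ 2 * (n + 1) ∨ j = 2 * (n + 1) + 1 ∨ j = 2 * (n + 1) + 2)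
        with h | h | h
      · rw [ht'1 j h]
        obtain ⟨ha, hb⟩ := htI j h
        exact ⟨ha, by linarith⟩
      · rw [h, ht'2]
        exact ⟨by linarith, by linarith⟩
      · rw [h, ht'3]
        exact ⟨by linarith, le_refl _⟩
    · intro j hj
      rcases (by omega : j < 2 * (n + 1) ∨ j = 2 * (n + 1) ∨ j = 2 * (n + 1) + 1)
        with h | h | h
      · rw [ht'1 j h.le, ht'1 (j + 1) h]
        exact htlt j h
      · rw [h, ht'1 _ (le_refl _), htlast, ht'2]
        linarith
      · rw [h, ht'2, show 2 * (n + 1) + 1 + 1 = 2 * (n + 1) + 2 from rfl, ht'3]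
        linarith
    · rw [ht'1 0 (by omega), ht0]
    · rw [h2n, ht'3]
    · intro j hj
      rcases (by omega : j ≤ 2 * (n + 1) ∨ j = 2 * (n + 1) + 1 ∨ j = 2 * (n + 1) + 2)
        with h | h | h
      · rw [ht'1 j h, hγ'1 _ (htI j h).2]
        exact htval j h
      · rw [h, ht'2, hγ'2 _ (by linarith), show P + s₁ - P = s₁ by ring, hgGs₁,
          if_neg (by simp [Nat.even_add_one, parity_simps])]
      · rw [h, ht'3, hγ'2 _ (by linarith), show P + (s₁ + s₂) - P = s₁ + s₂ by ring, hgGP,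
          if_pos (by simp [parity_simps])]

theorem causal_antisymm (hpc : S.CausallyPathConnected) (hGH : S.GloballyHyperbolic)
    {z z' : X} (hzz' : S.causal z z') (hz'z : S.causal z' z) : z = z' := by
  by_contra hne
  have h1 : S.strictCausal z z' := ⟨hzz', hne⟩
  have h2 : S.strictCausal z' z := ⟨hz'z, Ne.symm hne⟩
  obtain ⟨C, hC, hbound⟩ := hGH.1 _ (hGH.2 z z)
  have hEne : edist z z' ≠ 0 := fun h => hne (edist_eq_zero.1 h)
  obtain ⟨n, hn⟩ : ∃ n : ℕ, ENNReal.ofReal C < (n : ℝ≥0∞) * edist z z' := by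
    obtain ⟨n, hn⟩ := ENNReal.exists_nat_gt (show ENNReal.ofReal C / edist z z' ≠ ⊤ by
      simp [ENNReal.div_eq_top, hEne, ENNReal.ofReal_ne_top])
    exact ⟨n, by rwa [ENNReal.div_lt_iff (Or.inl hEne) (Or.inr ENNReal.ofReal_ne_top)] at hn⟩
  obtain ⟨P, γ, t, hP, hpiece, htI, htlt, ht0, htlast, htval⟩ := loop_exists hpc h1 h2 n
  have hval0 : γ 0 = z := by
    have := htval 0 (by omega)
    rw [ht0] at this
    simpa using this
  have hvalP : γ P = z := by
    have := htval _ (le_refl (2 * (n + 1)))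
    rw [htlast] at this
    simpa using this
  have hmemK : ∀ x ∈ Icc (0:ℝ) P, γ x ∈ {y : X | S.causal z y ∧ S.causal y z} := by
    intro x hx
    constructor
    · rcases eq_or_lt_of_le hx.1 with h | h
      · rw [← h, hval0]
        exact S.causal_refl z
      · have := hpiece.2 0 ⟨le_refl _, hP.le⟩ x hx h
        rwa [hval0] at this
    · rcases eq_or_lt_of_le hx.2 with h | h
      · rw [h, hvalP]
        exact S.causal_refl z
      · have := hpiece.2 x hx P ⟨hP.le, le_refl _⟩ h
        rwa [hvalP] at this
  have hne01 : γ (t 0) ≠ γ (t 1) := by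
    rw [htval 0 (by omega), htval 1 (by omega)]
    simpa using hne
  have hcc : S.IsCausalCurveOn γ (Icc 0 P) :=
    ⟨ordConnected_Icc, ⟨t 0, htI 0 (by omega), t 1, htI 1 (by omega), hne01⟩, hpiece.1,
      fun s hs u hu hsu => hpiece.2 s hs u hu hsu⟩
  have hlen := hbound γ 0 P hP hcc hmemK
  set tF : Fin (2 * (n + 1) + 1) → ℝ := fun j => t j.val with htF
  have hSM : StrictMono tF := by
    rw [Fin.strictMono_iff_lt_succ]
    intro i
    exact htlt i.val i.isLt
  have hlow := sum_le_dLength (γ := γ) tF hSM (by simpa [htF] using ht0)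
    (by simpa [htF] using htlast)
  have hterm : ∀ i : Fin (2 * (n + 1)),
      edist (γ (tF i.castSucc)) (γ (tF i.succ)) = edist z z' := by
    intro i
    have hv1 := htval i.val (le_of_lt i.isLt)
    have hv2 := htval (i.val + 1) i.isLt
    show edist (γ (t i.val)) (γ (t (i.val + 1))) = _
    rw [hv1, hv2]
    by_cases he : Even i.val
    · rw [if_pos he, if_neg (by simp [Nat.even_add_one, he])]
    · rw [if_neg he, if_pos (by simp [Nat.even_add_one, he]), edist_comm]
  rw [Finset.sum_congr rfl (fun i _ => hterm i), Finset.sum_const, Finset.card_univ,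
    Fintype.card_fin] at hlow
  have hchain : ((2 * (n + 1) : ℕ) : ℝ≥0∞) * edist z z' ≤ ENNReal.ofReal C := by
    have := hlow.trans hlen
    rwa [nsmul_eq_mul] at this
  have hmono : (n : ℝ≥0∞) * edist z z' ≤ ((2 * (n + 1) : ℕ) : ℝ≥0∞) * edist z z' :=
    mul_le_mul_left (Nat.cast_le.2 (by omega)) _
  exact absurd ((hn.trans_le hmono).trans_le hchain) (lt_irrefl _)

theorem limit_causal_seq {K : Set X} (hKc : IsCompact K) {r : ℝ} (hr : 0 < r)
    (hcl : ∀ y ∈ K, ∃ U : Set X, Metric.closedBall y r ⊆ U ∧ ClosedProp S U)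
    (m₀ : ℕ) {y w : ℕ → X} {z z' : X}
    (hy : Tendsto y atTop (𝓝 z)) (hw : Tendsto w atTop (𝓝 z'))
    (hjoin : ∀ i, ∃ γ : ℝ → X, ∃ a b : ℝ, a ≤ b ∧ Piece S γ a b ∧ γ a = y i ∧ γ b = w i ∧
      (∀ t ∈ Icc a b, γ t ∈ K) ∧
      dLength γ a b ≤ (m₀ : ℝ≥0∞) * ENNReal.ofReal (r / 4)) :
    S.causal z z' ∨ z = z' := by
  choose γs as bs h1 h2 h3 h4 h5 h6 using hjoin
  exact limit_causal hKc hr hcl m₀ γs as bs z z' h1 h2 h5 h6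
    (hy.congr fun i => (h3 i).symm) (hw.congr fun i => (h4 i).symm)

theorem chron_chain {x : ℕ → X} (h : ∀ n, S.chron (x n) (x (n + 1))) :
    ∀ {a b : ℕ}, a < b → S.chron (x a) (x b) := by
  intro a b hab
  induction b with
  | zero => omega
  | succ b ihb =>
    rcases Nat.lt_or_ge a b with h' | h'
    · exact S.chron_trans (ihb h') (h b)
    · have : a = b := by omega
      subst this
      exact h a

theorem causal_chain {x : ℕ → X} (h : ∀ n, S.chron (x n) (x (n + 1))) :
    ∀ {a b : ℕ}, a ≤ b → S.causal (x a) (x b) := by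
  intro a b hab
  rcases eq_or_lt_of_le hab with rfl | h'
  · exact S.causal_refl _
  · exact S.chron_imp_causal (chron_chain h h')

theorem tendsto_omega {Ω : Set X} (hΩo : IsOpen Ω) {ω : X → X → ℝ≥0∞}
    (hωc : ContinuousOn (fun p : X × X => ω p.1 p.2) (Ω ×ˢ Ω)) {u v : X} (hu : u ∈ Ω)
    (hv : v ∈ Ω) {y w : ℕ → X} (hy : Tendsto y atTop (𝓝 u)) (hw : Tendsto w atTop (𝓝 v)) :
    Tendsto (fun k => ω (y k) (w k)) atTop (𝓝 (ω u v)) := by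
  have hca : ContinuousAt (fun p : X × X => ω p.1 p.2) (u, v) :=
    hωc.continuousAt ((hΩo.prod hΩo).mem_nhds ⟨hu, hv⟩)
  exact hca.tendsto.comp (hy.prodMk_nhds hw)

theorem chron_chain_rev {x : ℕ → X} (h : ∀ n, S.chron (x (n + 1)) (x n)) :
    ∀ {a b : ℕ}, a < b → S.chron (x b) (x a) := by
  intro a b hab
  induction b with
  | zero => omega
  | succ b ihb =>
    rcases Nat.lt_or_ge a b with h' | h'
    · exact S.chron_trans (h b) (ihb h')
    · have : a = b := by omega
      subst this
      exact h a

theorem causal_chain_rev {x : ℕ → X} (h : ∀ n, S.chron (x (n + 1)) (x n)) :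
    ∀ {a b : ℕ}, a ≤ b → S.causal (x b) (x a) := by
  intro a b hab
  rcases eq_or_lt_of_le hab with rfl | h'
  · exact S.causal_refl _
  · exact S.chron_imp_causal (chron_chain_rev h h')

end Aux
end LorentzianPreLength

open LorentzianPreLength in
/-- Finite compactness implies timelike Cauchy completeness for globally hyperbolic
Lorentzian length spaces (Theorem 3.4). -/
theorem timelikeCauchyComplete_of_finitelyCompact
    {X : Type*} [MetricSpace X] (S : LorentzianPreLength X)
    (hLLS : S.IsLorentzianLengthSpace) (hGH : S.GloballyHyperbolic)
    (hFC : S.FinitelyCompact) :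
    S.TimelikeCauchyComplete := by
  obtain ⟨hpc, hwc, hloc, -⟩ := hLLS
  intro x B hB0 hBlim hcase
  rcases hcase with ⟨hch, htb⟩ | ⟨hch, htb⟩
  · -- future-directed case
    have hB0pos : 0 < B 0 := by
      by_contra h
      push_neg at h
      have h1 : 0 < S.tau (x 0) (x 1) := (S.tau_pos_iff _ _).2 (hch 0)
      have h2 : S.tau (x 0) (x 1) ≤ ENNReal.ofReal (B 0) := by
        simpa using htb 0 1 one_pos
      rw [ENNReal.ofReal_eq_zero.2 h] at h2
      exact absurd (le_antisymm h2 zero_le) (ne_of_gt h1)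
    obtain ⟨z, hz⟩ := (hFC (B 0) hB0pos (x 0) (x 1) (fun n => x (n + 2))).1
      (fun n => ⟨hch 0, causal_chain hch (by omega), by simpa using htb 0 (n + 2) (by omega)⟩)
    obtain ⟨φ₀, hφ₀, hφ₀t⟩ := TopologicalSpace.FirstCountableTopology.tendsto_subseq hz
    set φ : ℕ → ℕ := fun k => φ₀ k + 2 with hφdef
    have hφSM : StrictMono φ := fun i j h => Nat.add_lt_add_right (hφ₀ h) 2
    have hφt : Tendsto (fun k => x (φ k)) atTop (𝓝 z) := by
      simpa [hφdef, Function.comp_def] using hφ₀t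
    obtain ⟨Ω, hΩo, hzΩ, -, ω, hωc, -, -, hωpos, -, hωIO, -⟩ := hloc z
    obtain ⟨⟨v, hvΩ, hzv⟩, u, huΩ, huz⟩ := hωIO z hzΩ
    have hXin : ∀ᶠ k in atTop, x (φ k) ∈ Ω := hφt (hΩo.mem_nhds hzΩ)
    have hev1 : ∀ᶠ k in atTop, S.chron u (x (φ k)) := by
      have hpos : 0 < ω u z := (hωpos u huΩ z hzΩ).2 huz
      have ht := tendsto_omega hΩo hωc huΩ hzΩ (tendsto_const_nhds (x := u)) hφt
      filter_upwards [ht.eventually (eventually_gt_nhds hpos), hXin] with k h1 h2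
      exact (hωpos u huΩ _ h2).1 h1
    have hev2 : ∀ᶠ k in atTop, S.chron (x (φ k)) v := by
      have hpos : 0 < ω z v := (hωpos z hzΩ v hvΩ).2 hzv
      have ht := tendsto_omega hΩo hωc hzΩ hvΩ hφt (tendsto_const_nhds (x := v))
      filter_upwards [ht.eventually (eventually_gt_nhds hpos), hXin] with k h1 h2
      exact (hωpos _ h2 v hvΩ).1 h1
    obtain ⟨N₀, hN₀⟩ := eventually_atTop.1 (hev1.and hev2)
    set N₁ : ℕ := φ N₀ with hN₁def
    have hubd : ∀ n, N₁ ≤ n → S.causal u (x n) := fun n hn =>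
      S.causal_trans (S.chron_imp_causal (hN₀ N₀ (le_refl _)).1) (causal_chain hch hn)
    have hvbd : ∀ n, S.causal (x n) v := by
      intro n
      have hk : n ≤ φ (max N₀ n) := le_trans (le_max_right _ _) hφSM.le_apply
      exact S.causal_trans (causal_chain hch hk)
        (S.chron_imp_causal (hN₀ (max N₀ n) (le_max_left _ _)).2)
    set K : Set X := {y : X | S.causal u y ∧ S.causal y v} with hKdef
    have hKc : IsCompact K := hGH.2 u v
    obtain ⟨C, hCpos, hbound⟩ := hGH.1 K hKc
    obtain ⟨r, hr, hcl⟩ := exists_uniform_radius hwc hKc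
    set m₀ : ℕ := ⌈C / (r / 4)⌉₊ with hm₀def
    have hCle : ENNReal.ofReal C ≤ (m₀ : ℝ≥0∞) * ENNReal.ofReal (r / 4) := by
      have h1 : C / (r / 4) ≤ (m₀ : ℝ) := Nat.le_ceil _
      have h2 : C ≤ (m₀ : ℝ) * (r / 4) := by
        rwa [div_le_iff₀ (by linarith)] at h1
      calc ENNReal.ofReal C ≤ ENNReal.ofReal ((m₀ : ℝ) * (r / 4)) :=
            ENNReal.ofReal_le_ofReal h2
        _ = (m₀ : ℝ≥0∞) * ENNReal.ofReal (r / 4) := by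
            rw [ENNReal.ofReal_mul (Nat.cast_nonneg m₀), ENNReal.ofReal_natCast]
    have hcurve : ∀ m n : ℕ, N₁ ≤ m → m < n → ∃ γ : ℝ → X, ∃ a b : ℝ, a ≤ b ∧
        Piece S γ a b ∧ γ a = x m ∧ γ b = x n ∧ (∀ t ∈ Icc a b, γ t ∈ K) ∧
        dLength γ a b ≤ (m₀ : ℝ≥0∞) * ENNReal.ofReal (r / 4) := by
      intro m n hm hmn
      obtain ⟨γ, a, b, hab, hcc, ha, hb⟩ := hpc.1 _ _ (chron_chain hch hmn)
      have hccc : S.IsCausalCurveOn γ (Icc a b) :=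
        ⟨hcc.1, hcc.2.1, hcc.2.2.1, fun s hs t ht hst =>
          S.chron_imp_causal (hcc.2.2.2 hs ht hst)⟩
      have hmemK : ∀ t ∈ Icc a b, γ t ∈ K := by
        intro t ht
        have h1 : S.causal (γ a) (γ t) :=
          hccc.piece.causal_le hab.le ⟨le_refl _, hab.le⟩ ht ht.1
        have h2 : S.causal (γ t) (γ b) :=
          hccc.piece.causal_le hab.le ht ⟨hab.le, le_refl _⟩ ht.2
        exact ⟨S.causal_trans (hubd m hm) (ha ▸ h1), S.causal_trans (hb ▸ h2) (hvbd n)⟩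
      exact ⟨γ, a, b, hab.le, hccc.piece, ha, hb, hmemK,
        (hbound γ a b hab hccc hmemK).trans hCle⟩
    refine ⟨z, ?_⟩
    by_contra hnot
    rw [Metric.tendsto_atTop] at hnot
    push_neg at hnot
    obtain ⟨ε, hε, hfar⟩ := hnot
    have hfreq : ∃ᶠ n in atTop, ε ≤ dist (x n) z := by
      rw [frequently_atTop]
      intro N
      obtain ⟨n, hn1, hn2⟩ := hfar N
      exact ⟨n, hn1, hn2⟩
    obtain ⟨ψ, hψSM, hψfar⟩ := extraction_of_frequently_atTop
      (hfreq.and_eventually (eventually_ge_atTop N₁))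
    obtain ⟨z', hz'K, ψ₂, hψ₂, hψ₂t⟩ := hKc.tendsto_subseq
      (x := fun k => x (ψ k)) (fun k => ⟨hubd _ (hψfar k).2, hvbd _⟩)
    have hψ₂t' : Tendsto (fun k => x (ψ (ψ₂ k))) atTop (𝓝 z') := by
      simpa [Function.comp_def] using hψ₂t
    have hzne : z ≠ z' := by
      intro h
      have hd : Tendsto (fun k => dist (x (ψ (ψ₂ k))) z) atTop (𝓝 (dist z' z)) :=
        hψ₂t'.dist tendsto_const_nhds
      have hge : ε ≤ dist z' z :=
        ge_of_tendsto hd (Eventually.of_forall fun k => (hψfar (ψ₂ k)).1)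
      rw [← h, dist_self] at hge
      linarith
    have hle1 : ∀ j : ℕ, j ≤ ψ (ψ₂ j) :=
      fun j => le_trans hψ₂.le_apply hψSM.le_apply
    have hg1 : Tendsto (fun i : ℕ => φ (i + N₀) + 1) atTop atTop :=
      tendsto_atTop_mono (fun i => by
        have h : i + N₀ ≤ φ (i + N₀) := hφSM.le_apply
        simp only [id_eq]
        omega) tendsto_id
    have hw1 : Tendsto (fun i : ℕ => x (ψ (ψ₂ (φ (i + N₀) + 1)))) atTop (𝓝 z') :=
      hψ₂t'.comp hg1
    have hg2 : Tendsto (fun i : ℕ => ψ (ψ₂ i) + N₀ + 1) atTop atTop :=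
      tendsto_atTop_mono (fun i => by
        have h : i ≤ ψ (ψ₂ i) := hle1 i
        simp only [id_eq]
        omega) tendsto_id
    have hw2 : Tendsto (fun i : ℕ => x (φ (ψ (ψ₂ i) + N₀ + 1))) atTop (𝓝 z) :=
      hφt.comp hg2
    have hjoins : ∀ i : ℕ, φ (i + N₀) < ψ (ψ₂ (φ (i + N₀) + 1)) := fun i =>
      lt_of_lt_of_le (Nat.lt_succ_self _) (hle1 (φ (i + N₀) + 1))
    have hjoins2 : ∀ i : ℕ, ψ (ψ₂ i) < φ (ψ (ψ₂ i) + N₀ + 1) := fun i =>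
      lt_of_lt_of_le (by omega) hφSM.le_apply
    have hd1 : S.causal z z' := by
      have := limit_causal_seq hKc hr hcl m₀
        (y := fun i => x (φ (i + N₀))) (w := fun i => x (ψ (ψ₂ (φ (i + N₀) + 1))))
        (z := z) (z' := z')
        (hφt.comp (tendsto_add_atTop_nat N₀)) hw1
        (fun i => hcurve (φ (i + N₀)) (ψ (ψ₂ (φ (i + N₀) + 1)))
          (hφSM.monotone (Nat.le_add_left N₀ i)) (hjoins i))
      rcases this with h | h
      · exact h
      · exact absurd h hzne
    have hd2 : S.causal z' z := by
      have := limit_causal_seq hKc hr hcl m₀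
        (y := fun i => x (ψ (ψ₂ i))) (w := fun i => x (φ (ψ (ψ₂ i) + N₀ + 1)))
        (z := z') (z' := z) hψ₂t' hw2
        (fun i => hcurve (ψ (ψ₂ i)) (φ (ψ (ψ₂ i) + N₀ + 1)) (hψfar (ψ₂ i)).2 (hjoins2 i))
      rcases this with h | h
      · exact h
      · exact absurd h.symm hzne
    exact hzne (causal_antisymm hpc hGH hd1 hd2)
  · -- past-directed case
    have hB0pos : 0 < B 0 := by
      by_contra h
      push_neg at h
      have h1 : 0 < S.tau (x 1) (x 0) := (S.tau_pos_iff _ _).2 (hch 0)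
      have h2 : S.tau (x 1) (x 0) ≤ ENNReal.ofReal (B 0) := by
        simpa using htb 0 1 one_pos
      rw [ENNReal.ofReal_eq_zero.2 h] at h2
      exact absurd (le_antisymm h2 zero_le) (ne_of_gt h1)
    obtain ⟨z, hz⟩ := (hFC (B 0) hB0pos (x 0) (x 1) (fun n => x (n + 2))).2
      (fun n => ⟨causal_chain_rev hch (by omega), hch 0, by simpa using htb 0 (n + 2) (by omega)⟩)
    obtain ⟨φ₀, hφ₀, hφ₀t⟩ := TopologicalSpace.FirstCountableTopology.tendsto_subseq hz
    set φ : ℕ → ℕ := fun k => φ₀ k + 2 with hφdef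
    have hφSM : StrictMono φ := fun i j h => Nat.add_lt_add_right (hφ₀ h) 2
    have hφt : Tendsto (fun k => x (φ k)) atTop (𝓝 z) := by
      simpa [hφdef, Function.comp_def] using hφ₀t
    obtain ⟨Ω, hΩo, hzΩ, -, ω, hωc, -, -, hωpos, -, hωIO, -⟩ := hloc z
    obtain ⟨⟨v, hvΩ, hzv⟩, u, huΩ, huz⟩ := hωIO z hzΩ
    have hXin : ∀ᶠ k in atTop, x (φ k) ∈ Ω := hφt (hΩo.mem_nhds hzΩ)
    have hev1 : ∀ᶠ k in atTop, S.chron u (x (φ k)) := by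
      have hpos : 0 < ω u z := (hωpos u huΩ z hzΩ).2 huz
      have ht := tendsto_omega hΩo hωc huΩ hzΩ (tendsto_const_nhds (x := u)) hφt
      filter_upwards [ht.eventually (eventually_gt_nhds hpos), hXin] with k h1 h2
      exact (hωpos u huΩ _ h2).1 h1
    have hev2 : ∀ᶠ k in atTop, S.chron (x (φ k)) v := by
      have hpos : 0 < ω z v := (hωpos z hzΩ v hvΩ).2 hzv
      have ht := tendsto_omega hΩo hωc hzΩ hvΩ hφt (tendsto_const_nhds (x := v))
      filter_upwards [ht.eventually (eventually_gt_nhds hpos), hXin] with k h1 h2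
      exact (hωpos _ h2 v hvΩ).1 h1
    obtain ⟨N₀, hN₀⟩ := eventually_atTop.1 (hev1.and hev2)
    set N₁ : ℕ := φ N₀ with hN₁def
    have hubd : ∀ n : ℕ, S.causal u (x n) := by
      intro n
      have hk : n ≤ φ (max N₀ n) := le_trans (le_max_right _ _) hφSM.le_apply
      exact S.causal_trans (S.chron_imp_causal (hN₀ (max N₀ n) (le_max_left _ _)).1)
        (causal_chain_rev hch hk)
    have hvbd : ∀ n, N₁ ≤ n → S.causal (x n) v := fun n hn =>
      S.causal_trans (causal_chain_rev hch hn)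
        (S.chron_imp_causal (hN₀ N₀ (le_refl _)).2)
    set K : Set X := {y : X | S.causal u y ∧ S.causal y v} with hKdef
    have hKc : IsCompact K := hGH.2 u v
    obtain ⟨C, hCpos, hbound⟩ := hGH.1 K hKc
    obtain ⟨r, hr, hcl⟩ := exists_uniform_radius hwc hKc
    set m₀ : ℕ := ⌈C / (r / 4)⌉₊ with hm₀def
    have hCle : ENNReal.ofReal C ≤ (m₀ : ℝ≥0∞) * ENNReal.ofReal (r / 4) := by
      have h1 : C / (r / 4) ≤ (m₀ : ℝ) := Nat.le_ceil _
      have h2 : C ≤ (m₀ : ℝ) * (r / 4) := by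
        rwa [div_le_iff₀ (by linarith)] at h1
      calc ENNReal.ofReal C ≤ ENNReal.ofReal ((m₀ : ℝ) * (r / 4)) :=
            ENNReal.ofReal_le_ofReal h2
        _ = (m₀ : ℝ≥0∞) * ENNReal.ofReal (r / 4) := by
            rw [ENNReal.ofReal_mul (Nat.cast_nonneg m₀), ENNReal.ofReal_natCast]
    have hcurve : ∀ m n : ℕ, N₁ ≤ m → m < n → ∃ γ : ℝ → X, ∃ a b : ℝ, a ≤ b ∧
        Piece S γ a b ∧ γ a = x n ∧ γ b = x m ∧ (∀ t ∈ Icc a b, γ t ∈ K) ∧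
        dLength γ a b ≤ (m₀ : ℝ≥0∞) * ENNReal.ofReal (r / 4) := by
      intro m n hm hmn
      obtain ⟨γ, a, b, hab, hcc, ha, hb⟩ := hpc.1 _ _ (chron_chain_rev hch hmn)
      have hccc : S.IsCausalCurveOn γ (Icc a b) :=
        ⟨hcc.1, hcc.2.1, hcc.2.2.1, fun s hs t ht hst =>
          S.chron_imp_causal (hcc.2.2.2 hs ht hst)⟩
      have hmemK : ∀ t ∈ Icc a b, γ t ∈ K := by
        intro t ht
        have h1 : S.causal (γ a) (γ t) :=
          hccc.piece.causal_le hab.le ⟨le_refl _, hab.le⟩ ht ht.1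
        have h2 : S.causal (γ t) (γ b) :=
          hccc.piece.causal_le hab.le ht ⟨hab.le, le_refl _⟩ ht.2
        exact ⟨S.causal_trans (hubd n) (ha ▸ h1), S.causal_trans (hb ▸ h2) (hvbd m hm)⟩
      exact ⟨γ, a, b, hab.le, hccc.piece, ha, hb, hmemK,
        (hbound γ a b hab hccc hmemK).trans hCle⟩
    refine ⟨z, ?_⟩
    by_contra hnot
    rw [Metric.tendsto_atTop] at hnot
    push_neg at hnot
    obtain ⟨ε, hε, hfar⟩ := hnot
    have hfreq : ∃ᶠ n in atTop, ε ≤ dist (x n) z := by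
      rw [frequently_atTop]
      intro N
      obtain ⟨n, hn1, hn2⟩ := hfar N
      exact ⟨n, hn1, hn2⟩
    obtain ⟨ψ, hψSM, hψfar⟩ := extraction_of_frequently_atTop
      (hfreq.and_eventually (eventually_ge_atTop N₁))
    obtain ⟨z', hz'K, ψ₂, hψ₂, hψ₂t⟩ := hKc.tendsto_subseq
      (x := fun k => x (ψ k)) (fun k => ⟨hubd _, hvbd _ (hψfar k).2⟩)
    have hψ₂t' : Tendsto (fun k => x (ψ (ψ₂ k))) atTop (𝓝 z') := by
      simpa [Function.comp_def] using hψ₂t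
    have hzne : z ≠ z' := by
      intro h
      have hd : Tendsto (fun k => dist (x (ψ (ψ₂ k))) z) atTop (𝓝 (dist z' z)) :=
        hψ₂t'.dist tendsto_const_nhds
      have hge : ε ≤ dist z' z :=
        ge_of_tendsto hd (Eventually.of_forall fun k => (hψfar (ψ₂ k)).1)
      rw [← h, dist_self] at hge
      linarith
    have hle1 : ∀ j : ℕ, j ≤ ψ (ψ₂ j) :=
      fun j => le_trans hψ₂.le_apply hψSM.le_apply
    have hg1 : Tendsto (fun i : ℕ => φ (i + N₀) + 1) atTop atTop :=
      tendsto_atTop_mono (fun i => by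
        have h : i + N₀ ≤ φ (i + N₀) := hφSM.le_apply
        simp only [id_eq]
        omega) tendsto_id
    have hw1 : Tendsto (fun i : ℕ => x (ψ (ψ₂ (φ (i + N₀) + 1)))) atTop (𝓝 z') :=
      hψ₂t'.comp hg1
    have hg2 : Tendsto (fun i : ℕ => ψ (ψ₂ i) + N₀ + 1) atTop atTop :=
      tendsto_atTop_mono (fun i => by
        have h : i ≤ ψ (ψ₂ i) := hle1 i
        simp only [id_eq]
        omega) tendsto_id
    have hw2 : Tendsto (fun i : ℕ => x (φ (ψ (ψ₂ i) + N₀ + 1))) atTop (𝓝 z) :=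
      hφt.comp hg2
    have hjoins : ∀ i : ℕ, φ (i + N₀) < ψ (ψ₂ (φ (i + N₀) + 1)) := fun i =>
      lt_of_lt_of_le (Nat.lt_succ_self _) (hle1 (φ (i + N₀) + 1))
    have hjoins2 : ∀ i : ℕ, ψ (ψ₂ i) < φ (ψ (ψ₂ i) + N₀ + 1) := fun i =>
      lt_of_lt_of_le (by omega) hφSM.le_apply
    have hd1 : S.causal z' z := by
      have := limit_causal_seq hKc hr hcl m₀
        (y := fun i => x (ψ (ψ₂ (φ (i + N₀) + 1)))) (w := fun i => x (φ (i + N₀)))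
        (z := z') (z' := z) hw1
        (hφt.comp (tendsto_add_atTop_nat N₀))
        (fun i => hcurve (φ (i + N₀)) (ψ (ψ₂ (φ (i + N₀) + 1)))
          (hφSM.monotone (Nat.le_add_left N₀ i)) (hjoins i))
      rcases this with h | h
      · exact h
      · exact absurd h hzne.symm
    have hd2 : S.causal z z' := by
      have := limit_causal_seq hKc hr hcl m₀
        (y := fun i => x (φ (ψ (ψ₂ i) + N₀ + 1))) (w := fun i => x (ψ (ψ₂ i)))
        (z := z) (z' := z') hw2 hψ₂t'
        (fun i => hcurve (ψ (ψ₂ i)) (φ (ψ (ψ₂ i) + N₀ + 1)) (hψfar (ψ₂ i)).2 (hjoins2 i))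
      rcases this with h | h
      · exact h
      · exact absurd h hzne
    exact hzne (causal_antisymm hpc hGH hd2 hd1)
end
end

section
/- Let (X, ≪, ≤, d, τ) be a globally hyperbolic Lorentzian length space and let (x_n) be a sequence in X with x_n ≪ x_{n+1} for all n. If some subsequence (x_{n(k)}) converges to a point x_∞ ∈ X, then the full sequence (x_n) converges to x_∞. -/
open Set Filter Topology
open scoped ENNReal NNReal

noncomputable section

private lemma lipGlue {X : Type*} [MetricSpace X] {f : ℝ → X} {K₁ K₂ : ℝ≥0} {u v w : ℝ}
    (huv : u ≤ v) (_hvw : v ≤ w)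
    (h1 : LipschitzOnWith K₁ f (Icc u v)) (h2 : LipschitzOnWith K₂ f (Icc v w)) :
    LipschitzOnWith (max K₁ K₂) f (Icc u w) := by
  rw [lipschitzOnWith_iff_dist_le_mul] at h1 h2 ⊢
  have hK : ∀ p ∈ Icc u w, ∀ q ∈ Icc u w, p ≤ q → dist (f p) (f q) ≤ (max K₁ K₂ : ℝ≥0) * dist p q := by
    intro p hp q hq hpq
    have hK1 : (K₁ : ℝ) ≤ (max K₁ K₂ : ℝ≥0) := by exact_mod_cast le_max_left K₁ K₂
    have hK2 : (K₂ : ℝ) ≤ (max K₁ K₂ : ℝ≥0) := by exact_mod_cast le_max_right K₁ K₂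
    rcases le_total q v with h | h
    · calc dist (f p) (f q) ≤ K₁ * dist p q := h1 p ⟨hp.1, hpq.trans h⟩ q ⟨hp.1.trans hpq, h⟩
        _ ≤ _ := by gcongr
    · rcases le_total v p with h' | h'
      · calc dist (f p) (f q) ≤ K₂ * dist p q := h2 p ⟨h', hpq.trans hq.2⟩ q ⟨h'.trans hpq, hq.2⟩
          _ ≤ _ := by gcongr
      · have hd : dist p v + dist v q = dist p q := by
          rw [Real.dist_eq, Real.dist_eq, Real.dist_eq,
            abs_of_nonpos (by linarith), abs_of_nonpos (by linarith), abs_of_nonpos (by linarith)]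
          ring
        calc dist (f p) (f q) ≤ dist (f p) (f v) + dist (f v) (f q) := dist_triangle _ _ _
          _ ≤ K₁ * dist p v + K₂ * dist v q := by
              gcongr
              · exact h1 p ⟨hp.1, h'⟩ v ⟨huv, le_refl v⟩
              · exact h2 v ⟨le_refl v, h.trans hq.2⟩ q ⟨h, hq.2⟩
          _ ≤ (max K₁ K₂ : ℝ≥0) * dist p v + (max K₁ K₂ : ℝ≥0) * dist v q := by gcongr
          _ = (max K₁ K₂ : ℝ≥0) * (dist p v + dist v q) := by ring
          _ = _ := by rw [hd]
  intro p hp q hq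
  rcases le_total p q with h | h
  · exact hK p hp q hq h
  · rw [dist_comm, dist_comm p q]; exact hK q hq p hp h

open LorentzianPreLength in
theorem tendsto_of_subseq_tendsto_of_chron_chain'
    {X : Type*} [MetricSpace X] (S : LorentzianPreLength X)
    (hCPC_tl : ∀ x y : X, S.chron x y → ∃ (γ : ℝ → X) (a b : ℝ), a < b ∧
      S.IsTimelikeCurveOn γ (Icc a b) ∧ γ a = x ∧ γ b = y)
    (hq_ex : ∀ y : X, ∃ z : X, S.chron y z)
    (hGH : S.GloballyHyperbolic)
    (x : ℕ → X) (hchain : ∀ n, S.chron (x n) (x (n + 1)))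
    (n : ℕ → ℕ) (hn : StrictMono n) (xinf : X)
    (hconv : Filter.Tendsto (fun k => x (n k)) Filter.atTop (nhds xinf)) :
    Filter.Tendsto x Filter.atTop (nhds xinf) := by
  classical
  obtain ⟨hNTI, hJcpt⟩ := hGH
  -- chronological chain
  have hchron_lt : ∀ m l : ℕ, m < l → S.chron (x m) (x l) := by
    intro m l hml
    induction l with
    | zero => omega
    | succ l ih =>
      rcases Nat.lt_succ_iff_lt_or_eq.mp hml with h | h
      · exact S.chron_trans (ih h) (hchain l)
      · subst h; exact hchain m
  have hcaus_le : ∀ m l : ℕ, m ≤ l → S.causal (x m) (x l) := by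
    intro m l h
    rcases h.lt_or_eq with h | h
    · exact S.chron_imp_causal (hchron_lt _ _ h)
    · subst h; exact S.causal_refl _
  -- an upper bound q for the whole sequence
  obtain ⟨q, hq⟩ := hq_ex xinf
  have hτpos : (0:ℝ≥0∞) < S.tau xinf q := (S.tau_pos_iff _ _).2 hq
  have hev : ∀ᶠ k in atTop, S.chron (x (n k)) q := by
    have h1 : Tendsto (fun k => ((x (n k)), q)) atTop (𝓝 (xinf, q)) :=
      hconv.prodMk_nhds tendsto_const_nhds
    have h2 := S.tau_lsc (xinf, q) 0 hτpos
    filter_upwards [h1.eventually h2] with k hk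
    exact (S.tau_pos_iff _ _).1 hk
  obtain ⟨k₀, hk₀⟩ := eventually_atTop.mp hev
  have hq_all : ∀ m : ℕ, S.causal (x m) q := by
    intro m
    have h1 : S.chron (x (n (max k₀ (m+1)))) q := hk₀ _ (le_max_left _ _)
    have h2 : m < n (max k₀ (m+1)) :=
      lt_of_lt_of_le (Nat.lt_succ_self m) ((le_max_right k₀ (m+1)).trans hn.le_apply)
    exact S.chron_imp_causal (S.chron_trans (hchron_lt m _ h2) h1)
  -- compact causal diamond and the imprisonment constant
  set K : Set X := {z : X | S.causal (x 0) z ∧ S.causal z q} with hKdef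
  obtain ⟨C, hC, hCb⟩ := hNTI K (hJcpt (x 0) q)
  -- connecting timelike curves
  choose γ a b hab hTL hga hgb using fun i => hCPC_tl (x i) (x (i+1)) (hchain i)
  have hba : ∀ i, (0:ℝ) < b i - a i := fun i => sub_pos.2 (hab i)
  -- affine reparametrizations and concatenation
  set φ : ℕ → ℝ → ℝ := fun i t => a i + (t - i) * (b i - a i) with hφdef
  set Γ : ℝ → X := fun t => γ ⌊t⌋₊ (φ ⌊t⌋₊ t) with hΓdef
  have hφa : ∀ i : ℕ, φ i i = a i := by intro i; simp [hφdef]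
  have hφb : ∀ i : ℕ, φ i ((i:ℝ)+1) = b i := by intro i; simp [hφdef]
  have hφmem : ∀ (i : ℕ) (t : ℝ), (i:ℝ) ≤ t → t ≤ (i:ℝ)+1 → φ i t ∈ Icc (a i) (b i) := by
    intro i t h1 h2
    constructor
    · simp only [hφdef]; nlinarith [hba i]
    · simp only [hφdef]; nlinarith [hba i]
  have hφlt : ∀ (i : ℕ) (t : ℝ), t < (i:ℝ)+1 → φ i t < b i := by
    intro i t h; simp only [hφdef]; nlinarith [hba i]
  have hφsm : ∀ (i : ℕ) (s t : ℝ), s < t → φ i s < φ i t := by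
    intro i s t h; simp only [hφdef]; nlinarith [hba i]
  have hΓnat : ∀ m : ℕ, Γ (m:ℝ) = x m := by
    intro m
    simp only [hΓdef, Nat.floor_natCast]
    rw [hφa m, hga m]
  have hΓpiece : ∀ (i : ℕ) (t : ℝ), (i:ℝ) ≤ t → t ≤ (i:ℝ)+1 → Γ t = γ i (φ i t) := by
    intro i t h1 h2
    rcases lt_or_eq_of_le h2 with h | h
    · have hfl : ⌊t⌋₊ = i := (Nat.floor_eq_iff (le_trans (Nat.cast_nonneg i) h1)).2 ⟨h1, h⟩
      simp only [hΓdef, hfl]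
    · have : t = ((i+1 : ℕ) : ℝ) := by push_cast; linarith
      rw [this, hΓnat (i+1)]
      rw [show ((i+1:ℕ):ℝ) = (i:ℝ)+1 by push_cast; ring, hφb i, hgb i]
  -- the curve γ i stays in K
  have hγK : ∀ (i : ℕ) (s : ℝ), s ∈ Icc (a i) (b i) → γ i s ∈ K := by
    intro i s hs
    have hmema : a i ∈ Icc (a i) (b i) := left_mem_Icc.2 (hab i).le
    have hmemb : b i ∈ Icc (a i) (b i) := right_mem_Icc.2 (hab i).le
    constructor
    · have h1 : S.causal (x i) (γ i s) := by
        rcases eq_or_lt_of_le hs.1 with h | h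
        · rw [← h, hga i]; exact S.causal_refl _
        · rw [← hga i]; exact S.chron_imp_causal ((hTL i).2.2.2 hmema hs h)
      exact S.causal_trans (hcaus_le 0 i (Nat.zero_le i)) h1
    · have h1 : S.causal (γ i s) (x (i+1)) := by
        rcases eq_or_lt_of_le hs.2 with h | h
        · rw [h, hgb i]; exact S.causal_refl _
        · rw [← hgb i]; exact S.chron_imp_causal ((hTL i).2.2.2 hs hmemb h)
      exact S.causal_trans h1 (hq_all (i+1))
  have hΓK : ∀ t : ℝ, 0 ≤ t → Γ t ∈ K := by
    intro t ht
    have h1 : (⌊t⌋₊ : ℝ) ≤ t := Nat.floor_le ht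
    have h2 : t ≤ (⌊t⌋₊ : ℝ) + 1 := (Nat.lt_floor_add_one t).le
    rw [hΓpiece _ _ h1 h2]
    exact hγK _ _ (hφmem _ _ h1 h2)
  -- causality of Γ
  have hL1a : ∀ t : ℝ, 0 ≤ t → S.causal (x ⌊t⌋₊) (Γ t) := by
    intro t ht
    have h1 : (⌊t⌋₊ : ℝ) ≤ t := Nat.floor_le ht
    have h2 : t ≤ (⌊t⌋₊ : ℝ) + 1 := (Nat.lt_floor_add_one t).le
    rcases eq_or_lt_of_le h1 with h | h
    · have hE : Γ t = x ⌊t⌋₊ := by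
        conv_lhs => rw [← h]
        exact hΓnat _
      rw [hE]; exact S.causal_refl _
    · rw [hΓpiece _ _ h1 h2, ← hga ⌊t⌋₊]
      have := hφsm ⌊t⌋₊ _ _ h
      rw [hφa] at this
      exact S.chron_imp_causal ((hTL ⌊t⌋₊).2.2.2 (left_mem_Icc.2 (hab _).le) (hφmem _ _ h1 h2) this)
  have hL1b : ∀ t : ℝ, 0 ≤ t → S.causal (Γ t) (x (⌊t⌋₊ + 1)) := by
    intro t ht
    have h1 : (⌊t⌋₊ : ℝ) ≤ t := Nat.floor_le ht
    have h2 : t < (⌊t⌋₊ : ℝ) + 1 := Nat.lt_floor_add_one t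
    rw [hΓpiece _ _ h1 h2.le, ← hgb ⌊t⌋₊]
    exact S.chron_imp_causal
      ((hTL ⌊t⌋₊).2.2.2 (hφmem _ _ h1 h2.le) (right_mem_Icc.2 (hab _).le) (hφlt _ _ h2))
  have hΓcausal : ∀ s t : ℝ, 0 ≤ s → s < t → S.causal (Γ s) (Γ t) := by
    intro s t hs hst
    have ht : (0:ℝ) ≤ t := hs.trans hst.le
    have hij : ⌊s⌋₊ ≤ ⌊t⌋₊ := Nat.floor_le_floor hst.le
    rcases eq_or_lt_of_le hij with h | h
    · have hs1 : (⌊s⌋₊ : ℝ) ≤ s := Nat.floor_le hs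
      have ht2 : t ≤ (⌊s⌋₊ : ℝ) + 1 := by rw [h]; exact (Nat.lt_floor_add_one t).le
      have ht1 : (⌊s⌋₊ : ℝ) ≤ t := hs1.trans hst.le
      have hs2 : s ≤ (⌊s⌋₊ : ℝ) + 1 := hst.le.trans ht2
      rw [hΓpiece _ _ hs1 hs2, hΓpiece _ _ ht1 ht2]
      exact S.chron_imp_causal
        ((hTL ⌊s⌋₊).2.2.2 (hφmem _ _ hs1 hs2) (hφmem _ _ ht1 ht2) (hφsm _ _ _ hst))
    · exact S.causal_trans (hL1b s hs) (S.causal_trans (hcaus_le _ _ h) (hL1a t ht))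
  -- local Lipschitz property of Γ, piecewise
  have hloc : ∀ (i : ℕ) (t : ℝ), (i:ℝ) ≤ t → t ≤ (i:ℝ)+1 →
      ∃ ε > 0, ∃ K : ℝ≥0, LipschitzOnWith K Γ (Icc (t-ε) (t+ε) ∩ Icc (i:ℝ) ((i:ℝ)+1)) := by
    intro i t h1 h2
    obtain ⟨K, U, hU, hlip⟩ := (hTL i).2.2.1 (φ i t) (hφmem i t h1 h2)
    obtain ⟨ε', hε', hball⟩ := Metric.mem_nhdsWithin_iff.mp hU
    have hne : b i - a i ≠ 0 := (hba i).ne'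
    refine ⟨ε' / (2 * (b i - a i)), div_pos hε' (by linarith [hba i]), K * (b i - a i).toNNReal, ?_⟩
    have hmaps : ∀ u ∈ Icc (t - ε' / (2 * (b i - a i))) (t + ε' / (2 * (b i - a i))) ∩
        Icc (i:ℝ) ((i:ℝ)+1), φ i u ∈ U := by
      intro u ⟨hu1, hu2⟩
      apply hball
      constructor
      · rw [Metric.mem_ball, Real.dist_eq]
        have : φ i u - φ i t = (u - t) * (b i - a i) := by simp only [hφdef]; ring
        rw [this, abs_mul, abs_of_pos (hba i)]
        have habs : |u - t| ≤ ε' / (2 * (b i - a i)) := abs_sub_le_iff.2 ⟨by linarith [hu1.2], by linarith [hu1.1]⟩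
        calc |u - t| * (b i - a i) ≤ ε' / (2 * (b i - a i)) * (b i - a i) := by
              gcongr; exact (hba i).le
          _ = ε' / 2 := by field_simp
          _ < ε' := by linarith
      · exact hφmem i u hu2.1 hu2.2
    rw [lipschitzOnWith_iff_dist_le_mul]
    intro u hu v hv
    rw [hΓpiece i u hu.2.1 hu.2.2, hΓpiece i v hv.2.1 hv.2.2]
    have hd : dist (φ i u) (φ i v) = (b i - a i) * dist u v := by
      rw [Real.dist_eq, Real.dist_eq]
      have : φ i u - φ i v = (u - v) * (b i - a i) := by simp only [hφdef]; ring
      rw [this, abs_mul, abs_of_pos (hba i)]; ring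
    calc dist (γ i (φ i u)) (γ i (φ i v)) ≤ K * dist (φ i u) (φ i v) :=
          (lipschitzOnWith_iff_dist_le_mul.mp hlip) _ (hmaps u hu) _ (hmaps v hv)
      _ = (K * (b i - a i).toNNReal : ℝ≥0) * dist u v := by
          rw [hd, NNReal.coe_mul, Real.coe_toNNReal _ (hba i).le]; ring
  -- Γ is locally Lipschitz on any [0, N]
  have hΓlip : ∀ N : ℕ, LorentzianPreLength.LocLipOn Γ (Icc 0 (N:ℝ)) := by
    intro N t ht
    set i := ⌊t⌋₊ with hi
    have h1 : (i:ℝ) ≤ t := Nat.floor_le ht.1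
    have h2 : t < (i:ℝ) + 1 := Nat.lt_floor_add_one t
    rcases eq_or_lt_of_le h1 with hti | hti
    · -- t is the natural number i
      rcases Nat.eq_zero_or_pos i with hi0 | hi0
      · -- t = 0 : use only the right piece
        have ht0 : t = 0 := by rw [hi0] at hti; exact_mod_cast hti.symm
        obtain ⟨ε, hε, K, hlip⟩ := hloc 0 t (by rw [ht0]; norm_num) (by rw [ht0]; norm_num)
        set δ := min ε 1 with hδdef
        have hδpos : (0:ℝ) < δ := lt_min hε one_pos
        have hδ1 : δ ≤ ε := min_le_left _ _
        have hδ2 : δ ≤ 1 := min_le_right _ _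
        refine ⟨K, Icc (t - δ) (t + δ) ∩ Icc 0 (N:ℝ), ?_, ?_⟩
        · exact inter_mem (mem_nhdsWithin_of_mem_nhds (Icc_mem_nhds (by linarith) (by linarith)))
            self_mem_nhdsWithin
        · apply hlip.mono
          rintro u ⟨hu1, hu2⟩
          refine ⟨⟨by linarith [hu1.1], by linarith [hu1.2]⟩, ?_, ?_⟩
          · push_cast; linarith [hu2.1]
          · push_cast; rw [ht0] at hu1; linarith [hu1.2]
      · -- 1 ≤ i : glue the left and right pieces at t = i
        have hcast : ((i-1:ℕ):ℝ) = (i:ℝ) - 1 := by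
          rw [Nat.cast_sub hi0, Nat.cast_one]
        obtain ⟨ε₁, hε₁, K₁, hlip₁⟩ := hloc (i-1) t (by rw [hcast]; linarith) (by rw [hcast]; linarith)
        obtain ⟨ε₂, hε₂, K₂, hlip₂⟩ := hloc i t h1 h2.le
        set δ := min (min ε₁ ε₂) 1 with hδdef
        have hδpos : (0:ℝ) < δ := lt_min (lt_min hε₁ hε₂) one_pos
        have hδ1 : δ ≤ ε₁ := (min_le_left _ _).trans (min_le_left _ _)
        have hδ2 : δ ≤ ε₂ := (min_le_left _ _).trans (min_le_right _ _)
        have hδ3 : δ ≤ 1 := min_le_right _ _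
        have hlipL : LipschitzOnWith K₁ Γ (Icc (t - δ) t) := by
          apply hlip₁.mono
          rintro u ⟨hu1, hu2⟩
          exact ⟨⟨by linarith, by linarith⟩, ⟨by rw [hcast]; linarith, by rw [hcast]; linarith⟩⟩
        have hlipR : LipschitzOnWith K₂ Γ (Icc t (t + δ)) := by
          apply hlip₂.mono
          rintro u ⟨hu1, hu2⟩
          exact ⟨⟨by linarith, by linarith⟩, ⟨by linarith, by linarith⟩⟩
        have hglue := lipGlue (by linarith) (by linarith) hlipL hlipR
        refine ⟨max K₁ K₂, Icc (t - δ) (t + δ) ∩ Icc 0 (N:ℝ), ?_, ?_⟩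
        · exact inter_mem (mem_nhdsWithin_of_mem_nhds (Icc_mem_nhds (by linarith) (by linarith)))
            self_mem_nhdsWithin
        · exact hglue.mono inter_subset_left
    · -- t strictly inside the piece
      obtain ⟨ε, hε, K, hlip⟩ := hloc i t h1 h2.le
      set δ := min ε (min (t - (i:ℝ)) ((i:ℝ) + 1 - t)) with hδ
      have hδpos : 0 < δ := by
        apply lt_min hε; exact lt_min (by linarith) (by linarith)
      refine ⟨K, Icc (t - δ) (t + δ) ∩ Icc 0 (N:ℝ), ?_, ?_⟩
      · exact inter_mem (mem_nhdsWithin_of_mem_nhds (Icc_mem_nhds (by linarith) (by linarith)))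
          self_mem_nhdsWithin
      · apply hlip.mono
        rintro u ⟨hu1, _⟩
        have hδ1 : δ ≤ ε := min_le_left _ _
        have hδ2 : δ ≤ t - (i:ℝ) := (min_le_right _ _).trans (min_le_left _ _)
        have hδ3 : δ ≤ (i:ℝ) + 1 - t := (min_le_right _ _).trans (min_le_right _ _)
        exact ⟨⟨by linarith [hu1.1], by linarith [hu1.2]⟩,
          ⟨by linarith [hu1.1], by linarith [hu1.2]⟩⟩
  -- non-constancy of Γ on [0,1]
  have hΓnc : ∃ u ∈ Icc (0:ℝ) 1, ∃ v ∈ Icc (0:ℝ) 1, Γ u ≠ Γ v := by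
    obtain ⟨s₀, hs₀, t₀, ht₀, hne⟩ := (hTL 0).2.1
    have hsur : ∀ s ∈ Icc (a 0) (b 0), ∃ u ∈ Icc (0:ℝ) 1, Γ u = γ 0 s := by
      intro s hs
      have hb0 := hba 0
      refine ⟨(s - a 0) / (b 0 - a 0), ⟨div_nonneg (by linarith [hs.1]) hb0.le,
        (div_le_one hb0).2 (by linarith [hs.2])⟩, ?_⟩
      have hu1 : ((0:ℕ):ℝ) ≤ (s - a 0) / (b 0 - a 0) := by
        push_cast; exact div_nonneg (by linarith [hs.1]) hb0.le
      have hu2 : (s - a 0) / (b 0 - a 0) ≤ ((0:ℕ):ℝ) + 1 := by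
        push_cast; rw [zero_add]; exact (div_le_one hb0).2 (by linarith [hs.2])
      rw [hΓpiece 0 _ hu1 hu2]
      congr 1
      simp only [hφdef]
      push_cast
      field_simp
      ring
    obtain ⟨u, hu, hu'⟩ := hsur s₀ hs₀
    obtain ⟨v, hv, hv'⟩ := hsur t₀ ht₀
    exact ⟨u, hu, v, hv, by rw [hu', hv']; exact hne⟩
  -- the uniform bound on partial sums
  have key : ∀ N : ℕ, ∑ i ∈ Finset.range N, dist (x i) (x (i+1)) ≤ C := by
    intro N
    rcases Nat.eq_zero_or_pos N with h0 | hNpos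
    · subst h0; simp [hC.le]
    have hN0 : (0:ℝ) < N := by exact_mod_cast hNpos
    have hN1 : (1:ℝ) ≤ N := by exact_mod_cast hNpos
    have hcurve : S.IsCausalCurveOn Γ (Icc 0 (N:ℝ)) := by
      refine ⟨Set.ordConnected_Icc, ?_, hΓlip N, ?_⟩
      · obtain ⟨u, hu, v, hv, hne⟩ := hΓnc
        exact ⟨u, ⟨hu.1, hu.2.trans hN1⟩, v, ⟨hv.1, hv.2.trans hN1⟩, hne⟩
      · intro s hs t ht hst
        exact hΓcausal s t hs.1 hst
    have hupper := hCb Γ 0 (N:ℝ) hN0 hcurve (fun t ht => hΓK t ht.1)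
    have hlower : ∑ i : Fin N, edist (x i) (x (i+1)) ≤ LorentzianPreLength.dLength Γ 0 (N:ℝ) := by
      have hsm : StrictMono (fun j : Fin (N+1) => ((j:ℕ):ℝ)) := by
        intro p q' hpq
        have h : (p:ℕ) < (q':ℕ) := hpq
        show ((p:ℕ):ℝ) < ((q':ℕ):ℝ)
        exact_mod_cast h
      calc ∑ i : Fin N, edist (x i) (x (i+1))
          = ∑ i : Fin N, edist (Γ (((i.castSucc : Fin (N+1)):ℕ):ℝ)) (Γ (((i.succ : Fin (N+1)):ℕ):ℝ)) := by
            apply Finset.sum_congr rfl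
            intro i _
            rw [show (((i.castSucc : Fin (N+1)):ℕ):ℝ) = (((i:ℕ)):ℝ) by simp,
              show (((i.succ : Fin (N+1)):ℕ):ℝ) = ((((i:ℕ)+1 : ℕ)):ℝ) by simp, hΓnat, hΓnat]
        _ ≤ _ := by
            rw [LorentzianPreLength.dLength]
            apply le_iSup_of_le N
            apply le_iSup_of_le (fun j : Fin (N+1) => ((j:ℕ):ℝ))
            apply le_iSup_of_le hsm
            apply le_iSup_of_le (by simp)
            apply le_iSup_of_le (by simp)
            exact le_rfl
    have h2 : ENNReal.ofReal (∑ i ∈ Finset.range N, dist (x i) (x (i+1))) ≤ ENNReal.ofReal C := by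
      rw [ENNReal.ofReal_sum_of_nonneg (fun i _ => dist_nonneg)]
      calc ∑ i ∈ Finset.range N, ENNReal.ofReal (dist (x i) (x (i+1)))
          = ∑ i : Fin N, edist (x i) (x (i+1)) := by
            rw [← Fin.sum_univ_eq_sum_range (fun i => ENNReal.ofReal (dist (x i) (x (i+1)))) N]
            exact Finset.sum_congr rfl fun i _ => (edist_dist _ _).symm
        _ ≤ ENNReal.ofReal C := hlower.trans hupper
    exact (ENNReal.ofReal_le_ofReal_iff hC.le).mp h2
  have hsum : Summable (fun i => dist (x i) (x (i+1))) :=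
    summable_of_sum_range_le (fun i => dist_nonneg) key
  have hcauchy : CauchySeq x := cauchySeq_of_summable_dist hsum
  exact tendsto_nhds_of_cauchySeq_of_subseq hcauchy hn.tendsto_atTop hconv


open LorentzianPreLength in
/-- In a globally hyperbolic Lorentzian length space, a chronologically increasing
sequence converges to the limit of any of its convergent subsequences. -/
theorem tendsto_of_subseq_tendsto_of_chron_chain
    {X : Type*} [MetricSpace X] (S : LorentzianPreLength X)
    (hLLS : S.IsLorentzianLengthSpace) (hGH : S.GloballyHyperbolic)
    (x : ℕ → X) (hchain : ∀ n, S.chron (x n) (x (n + 1)))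
    (n : ℕ → ℕ) (hn : StrictMono n) (xinf : X)
    (hconv : Filter.Tendsto (fun k => x (n k)) Filter.atTop (nhds xinf)) :
    Filter.Tendsto x Filter.atTop (nhds xinf) := by
  obtain ⟨hCPC, _, hLoc, _⟩ := hLLS
  have hq_ex : ∀ y : X, ∃ z : X, S.chron y z := by
    intro y
    obtain ⟨Ω, hΩo, hyΩ, hbnd, ω, hω⟩ := hLoc y
    obtain ⟨z, hzΩ, hz⟩ := (hω.2.2.2.2.2.1 y hyΩ).1
    exact ⟨z, hz⟩
  exact tendsto_of_subseq_tendsto_of_chron_chain' S hCPC.1 hq_ex hGH x hchain n hn xinf hconv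
end
end
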